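/- arXiv:1304.2677 — 5 statements merged into one kernel-verified Lean document; each statement's English description precedes it below -/
import Mathlib

section
/- For every ξ ∈ ℝ, (∫₀^∞ P(t) e^{−αt} t^{−iξ} dt) / (∫₀^∞ e^{−t} t^{−iξ} dt) = α^{iξ} · Σ_{k=0}^{K} q_k (iξ)^k. -/
open MeasureTheory Complex Polynomial Set Filter

noncomputable def nuCoeff (ℓ k : ℕ) : ℂ :=
  (∏ j ∈ Finset.Icc 1 k, (Polynomial.C (j : ℂ) - Polynomial.X)).coeff ℓ

private lemma gk_integrable {s γ : ℂ} (hs : 0 < s.re) (hγ : 0 < γ.re) :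
    IntegrableOn (fun t : ℝ => (t : ℂ) ^ (s - 1) * Complex.exp (-(γ * t))) (Ioi 0) := by
  have hmeas : AEStronglyMeasurable (fun t : ℝ => (t : ℂ) ^ (s - 1) * Complex.exp (-(γ * t)))
      (volume.restrict (Ioi 0)) := by
    refine (ContinuousOn.mul (fun t ht => ?_) (Continuous.continuousOn (by fun_prop))).aestronglyMeasurable measurableSet_Ioi
    exact (Complex.continuousAt_ofReal_cpow_const t (s - 1) (Or.inr (ne_of_gt ht))).continuousWithinAt
  refine Integrable.mono' (g := fun t : ℝ => t ^ (s.re - 1) * Real.exp (-γ.re * t)) ?_ hmeas ?_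
  · have := integrableOn_rpow_mul_exp_neg_mul_rpow (p := 1) (s := s.re - 1) (b := γ.re)
      (by linarith) zero_lt_one hγ
    simpa [Real.rpow_one, IntegrableOn] using this
  · filter_upwards [ae_restrict_mem measurableSet_Ioi] with t ht
    rw [norm_mul, Complex.norm_exp,
      Complex.norm_cpow_eq_rpow_re_of_pos ht]
    have : (-(γ * (t : ℂ))).re = -γ.re * t := by simp [Complex.mul_re]
    rw [this]
    simp

private lemma gk_diff {s : ℂ} (hs : 0 < s.re) :
    DifferentiableOn ℂ
      (fun γ : ℂ => ∫ t in Ioi (0:ℝ), (t : ℂ) ^ (s - 1) * Complex.exp (-(γ * t)))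
      {z : ℂ | 0 < z.re} := by
  intro γ₀ hγ₀
  apply DifferentiableAt.differentiableWithinAt
  have hγ₀' : 0 < γ₀.re := hγ₀
  set ε : ℝ := γ₀.re / 2 with hε
  have hε0 : 0 < ε := by positivity
  have key := hasDerivAt_integral_of_dominated_loc_of_deriv_le
    (μ := volume.restrict (Ioi (0:ℝ))) (x₀ := γ₀)
    (F := fun γ (t : ℝ) => (t : ℂ) ^ (s - 1) * Complex.exp (-(γ * t)))
    (F' := fun γ (t : ℝ) => -((t : ℂ) ^ s * Complex.exp (-(γ * t))))
    (bound := fun t : ℝ => t ^ s.re * Real.exp (-ε * t)) (Metric.ball_mem_nhds γ₀ hε0)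
    ?_ ?_ ?_ ?_ ?_ ?_
  · exact key.2.differentiableAt
  · filter_upwards [(isOpen_lt continuous_const Complex.continuous_re).mem_nhds hγ₀] with γ hγ
    exact (gk_integrable hs hγ).aestronglyMeasurable
  · exact gk_integrable hs hγ₀'
  · have := ((gk_integrable (s := s + 1) (γ := γ₀) (by simp; linarith) hγ₀').neg).aestronglyMeasurable
    simpa [add_sub_cancel_right, Pi.neg_def] using this
  · filter_upwards [ae_restrict_mem measurableSet_Ioi] with t ht γ hγ
    have hγre : ε ≤ γ.re := by
      have h1 : |(γ - γ₀).re| ≤ ‖γ - γ₀‖ := Complex.abs_re_le_norm _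
      have h2 : ‖γ - γ₀‖ < ε := by
        rwa [Metric.mem_ball, Complex.dist_eq] at hγ
      have := abs_lt.mp (lt_of_le_of_lt h1 h2)
      simp only [Complex.sub_re] at this
      have : γ₀.re - ε < γ.re := by linarith [this.1]
      simp only [hε] at this ⊢
      linarith
    rw [norm_neg, norm_mul, Complex.norm_exp,
      Complex.norm_cpow_eq_rpow_re_of_pos ht]
    have h3 : (-(γ * (t : ℂ))).re = -γ.re * t := by simp [Complex.mul_re]
    rw [h3]
    gcongr
    · exact Real.rpow_nonneg (le_of_lt ht) _
    · nlinarith [le_of_lt (show (0:ℝ) < t from ht)]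
  · have := integrableOn_rpow_mul_exp_neg_mul_rpow (p := 1) (s := s.re) (b := ε)
      (by linarith) zero_lt_one hε0
    simpa [Real.rpow_one, IntegrableOn] using this
  · filter_upwards [ae_restrict_mem measurableSet_Ioi] with t ht γ _
    have ht0 : (t : ℂ) ≠ 0 := by exact_mod_cast (ne_of_gt ht)
    have hd : HasDerivAt (fun γ : ℂ => -(γ * (t : ℂ))) (-(t : ℂ)) γ :=
      (hasDerivAt_mul_const (t : ℂ)).neg
    have hexp := hd.cexp
    have hfin := hexp.const_mul ((t : ℂ) ^ (s - 1))
    convert hfin using 1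
    · rfl
    rw [show (s : ℂ) = (s - 1) + 1 by ring, Complex.cpow_add _ _ ht0, cpow_one]
    ring_nf

private lemma gk_value {s : ℂ} (hs : 0 < s.re) {γ : ℂ} (hγ : 0 < γ.re) :
    ∫ t in Ioi (0:ℝ), (t : ℂ) ^ (s - 1) * Complex.exp (-(γ * t)) =
      Complex.Gamma s * γ ^ (-s) := by
  set U : Set ℂ := {z : ℂ | 0 < z.re} with hU
  have hUo : IsOpen U := isOpen_lt continuous_const Complex.continuous_re
  have hUc : IsPreconnected U := (convex_halfSpace_re_gt 0).isPreconnected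
  set F : ℂ → ℂ := fun γ => ∫ t in Ioi (0:ℝ), (t : ℂ) ^ (s - 1) * Complex.exp (-(γ * t)) with hF
  set G : ℂ → ℂ := fun γ => Complex.Gamma s * γ ^ (-s) with hG
  have hFa : AnalyticOnNhd ℂ F U := (gk_diff hs).analyticOnNhd hUo
  have hGa : AnalyticOnNhd ℂ G U := by
    apply DifferentiableOn.analyticOnNhd _ hUo
    intro z hz
    apply DifferentiableAt.differentiableWithinAt
    exact ((differentiableAt_id.cpow (differentiableAt_const _)
      (Complex.mem_slitPlane_iff.mpr (Or.inl hz))).const_mul _)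
  have heq : ∀ r : ℝ, 0 < r → F r = G r := by
    intro r hr
    have h := Complex.integral_cpow_mul_exp_neg_mul_Ioi (a := s) (r := r) hs hr
    have h2 : ((1 : ℂ) / r) ^ s = (r : ℂ) ^ (-s) := by
      rw [one_div, Complex.inv_cpow _ _ (by
        rw [Complex.arg_ofReal_of_nonneg hr.le]; exact Real.pi_ne_zero.symm),
        ← Complex.cpow_neg]
    rw [hF]
    simp only []
    rw [show (fun t : ℝ => (t : ℂ) ^ (s - 1) * Complex.exp (-((r : ℂ) * t))) =
      (fun t : ℝ => (t : ℂ) ^ (s - 1) * Complex.exp (-(r * t))) from rfl]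
    rw [h, h2, hG, mul_comm]
  have hfreq : ∃ᶠ z in nhdsWithin 1 {(1:ℂ)}ᶜ, F z = G z := by
    have htend : Tendsto (fun n : ℕ => ((1 + ((n:ℝ)+1)⁻¹ : ℝ) : ℂ)) atTop
        (nhdsWithin 1 {(1:ℂ)}ᶜ) := by
      apply tendsto_nhdsWithin_of_tendsto_nhds_of_eventually_within
      · have : Tendsto (fun n : ℕ => (1 + ((n:ℝ)+1)⁻¹ : ℝ)) atTop (nhds 1) := by
          have := tendsto_one_div_add_atTop_nhds_zero_nat (𝕜 := ℝ)
          simpa [one_div] using tendsto_const_nhds.add this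
        have h2 := (Complex.continuous_ofReal.tendsto 1).comp this
        simpa [Function.comp_def] using h2
      · filter_upwards with n
        simp only [mem_compl_iff, mem_singleton_iff]
        intro h
        have : (1 + ((n:ℝ)+1)⁻¹ : ℝ) = 1 := by exact_mod_cast h
        have hpos : (0:ℝ) < ((n:ℝ)+1)⁻¹ := by positivity
        linarith
    exact htend.frequently (Eventually.of_forall (fun n => heq _ (by positivity))).frequently
  exact hFa.eqOn_of_preconnected_of_frequently_eq hGa hUc (by simp [hU] : (1:ℂ) ∈ U) hfreq hγ

/-- Let `P(z) = Σ_{k=0}^{K} p_k z^k` and `Re α > 0`, and set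
`q_k = Σ_{ℓ=k}^{K} ν_{k,ℓ} α^{−1−ℓ} p_ℓ`.  Then for every `ξ ∈ ℝ`,
`(∫₀^∞ P(t) e^{−αt} t^{−iξ} dt) / (∫₀^∞ e^{−t} t^{−iξ} dt) = α^{iξ} Σ_{k=0}^{K} q_k (iξ)^k`
(principal powers of `α`, `t^{−iξ} = e^{−iξ log t}`). -/
theorem b_function_of_polynomial_kernel (K : ℕ) (p : ℕ → ℂ) (α : ℂ) (hα : 0 < α.re)
    (ξ : ℝ) :
    (∫ t in Set.Ioi (0 : ℝ),
          (∑ k ∈ Finset.range (K + 1), p k * (t : ℂ) ^ k) * Complex.exp (-α * t) *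
            Complex.exp (-(Complex.I * ξ) * Real.log t)) /
        (∫ t in Set.Ioi (0 : ℝ), Complex.exp (-(t : ℂ)) *
          Complex.exp (-(Complex.I * ξ) * Real.log t)) =
      α ^ (Complex.I * ξ) *
        ∑ k ∈ Finset.range (K + 1),
          (∑ ℓ ∈ Finset.Icc k K, nuCoeff k ℓ * α ^ (-1 - (ℓ : ℂ)) * p ℓ) *
            (Complex.I * ξ) ^ k := by
  set w : ℂ := Complex.I * ξ with hw
  have hwre : w.re = 0 := by simp [hw, Complex.mul_re]
  have hα0 : α ≠ 0 := by
    intro h; rw [h] at hα; simp at hα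
  -- cpow to exp on Ioi 0
  have hcpow : ∀ t : ℝ, 0 < t →
      (t : ℂ) ^ (-w) = Complex.exp (-(Complex.I * ξ) * Real.log t) := by
    intro t ht
    rw [Complex.cpow_def_of_ne_zero (by exact_mod_cast ht.ne'), ← Complex.ofReal_log ht.le, ← hw]
    congr 1
    ring
  -- denominator
  have hsre : ∀ k : ℕ, 0 < ((k : ℂ) + 1 - w).re := by
    intro k
    simp [Complex.add_re, Complex.sub_re, hwre]
    positivity
  have hD : (∫ t in Set.Ioi (0 : ℝ), Complex.exp (-(t : ℂ)) *
      Complex.exp (-(Complex.I * ξ) * Real.log t)) = Complex.Gamma (1 - w) := by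
    have h := gk_value (s := 1 - w) (by simpa using hsre 0) (γ := 1) (by simp)
    rw [one_cpow, mul_one] at h
    rw [← h]
    refine setIntegral_congr_fun measurableSet_Ioi (fun t ht => ?_)
    rw [show (1 : ℂ) - w - 1 = -w by ring, hcpow t ht, one_mul, mul_comm]
  have hDne : Complex.Gamma (1 - w) ≠ 0 := by
    apply Complex.Gamma_ne_zero_of_re_pos
    simpa using hsre 0
  -- numerator
  have hnum : (∫ t in Set.Ioi (0 : ℝ),
      (∑ k ∈ Finset.range (K + 1), p k * (t : ℂ) ^ k) * Complex.exp (-α * t) *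
        Complex.exp (-(Complex.I * ξ) * Real.log t)) =
      ∑ k ∈ Finset.range (K + 1),
        p k * (Complex.Gamma ((k : ℂ) + 1 - w) * α ^ (-((k : ℂ) + 1 - w))) := by
    have hstep : (∫ t in Set.Ioi (0 : ℝ),
        (∑ k ∈ Finset.range (K + 1), p k * (t : ℂ) ^ k) * Complex.exp (-α * t) *
          Complex.exp (-(Complex.I * ξ) * Real.log t)) =
        ∫ t in Set.Ioi (0 : ℝ), ∑ k ∈ Finset.range (K + 1),
          p k * ((t : ℂ) ^ (((k : ℂ) + 1 - w) - 1) * Complex.exp (-(α * t))) := by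
      refine setIntegral_congr_fun measurableSet_Ioi (fun t ht => ?_)
      rw [Finset.sum_mul, Finset.sum_mul]
      refine Finset.sum_congr rfl (fun k _ => ?_)
      have ht0 : (t : ℂ) ≠ 0 := by exact_mod_cast ht.ne'
      rw [show ((k : ℂ) + 1 - w) - 1 = (k : ℂ) + (-w) by ring, Complex.cpow_add _ _ ht0,
        Complex.cpow_natCast, hcpow t ht, neg_mul]
      ring
    rw [hstep, integral_finset_sum _ (fun k _ => ((gk_integrable (hsre k) hα).const_mul _))]
    refine Finset.sum_congr rfl (fun k _ => ?_)
    rw [MeasureTheory.integral_const_mul, gk_value (hsre k) hα]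
  -- Gamma recursion
  have hGam : ∀ k : ℕ, Complex.Gamma ((k : ℂ) + 1 - w) =
      (∏ j ∈ Finset.Icc 1 k, ((j : ℂ) - w)) * Complex.Gamma (1 - w) := by
    intro k
    induction k with
    | zero => simp
    | succ n ih =>
      have hne : (n : ℂ) + 1 - w ≠ 0 := by
        intro h
        have h2 := hsre n
        rw [h] at h2
        simp at h2
      have hcast : ((n + 1 : ℕ) : ℂ) + 1 - w = ((n : ℂ) + 1 - w) + 1 := by push_cast; ring
      rw [hcast, Complex.Gamma_add_one _ hne, ih,
        Finset.prod_Icc_succ_top (Nat.le_add_left 1 n)]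
      push_cast
      ring
  -- product to nuCoeff sum
  have hprod : ∀ k : ℕ, (∏ j ∈ Finset.Icc 1 k, ((j : ℂ) - w)) =
      ∑ ℓ ∈ Finset.range (k + 1), nuCoeff ℓ k * w ^ ℓ := by
    intro k
    have hdeg : (∏ j ∈ Finset.Icc 1 k, (Polynomial.C (j : ℂ) - Polynomial.X)).natDegree < k + 1 := by
      apply Nat.lt_succ_of_le
      refine le_trans (Polynomial.natDegree_prod_le _ _) ?_
      refine le_trans (Finset.sum_le_card_nsmul _ _ 1 (fun j _ => ?_)) (by simp [Nat.card_Icc])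
      exact le_trans (Polynomial.natDegree_sub_le _ _) (by simp)
    have h := Polynomial.eval_eq_sum_range' hdeg w
    rw [Polynomial.eval_prod] at h
    simp only [Polynomial.eval_sub, Polynomial.eval_C, Polynomial.eval_X] at h
    rw [h]
    rfl
  rw [hnum, hD]
  simp only [hGam, hprod]
  rw [show ∑ k ∈ Finset.range (K + 1),
      p k * ((∑ ℓ ∈ Finset.range (k + 1), nuCoeff ℓ k * w ^ ℓ) * Complex.Gamma (1 - w) *
        α ^ (-((k : ℂ) + 1 - w))) =
      Complex.Gamma (1 - w) * ∑ k ∈ Finset.range (K + 1),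
      p k * ((∑ ℓ ∈ Finset.range (k + 1), nuCoeff ℓ k * w ^ ℓ) *
        α ^ (-((k : ℂ) + 1 - w))) by rw [Finset.mul_sum]; exact Finset.sum_congr rfl fun k _ => by ring]
  rw [mul_comm, mul_div_assoc, div_self hDne, mul_one]
  calc ∑ k ∈ Finset.range (K + 1),
        p k * ((∑ ℓ ∈ Finset.range (k + 1), nuCoeff ℓ k * w ^ ℓ) * α ^ (-((k : ℂ) + 1 - w)))
      = α ^ w * ∑ k ∈ Finset.range (K + 1), ∑ ℓ ∈ Finset.range (k + 1),
          nuCoeff ℓ k * α ^ (-1 - (k : ℂ)) * p k * w ^ ℓ := by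
        rw [Finset.mul_sum]
        refine Finset.sum_congr rfl (fun k _ => ?_)
        rw [show -((k : ℂ) + 1 - w) = w + (-1 - (k : ℂ)) by ring,
          Complex.cpow_add _ _ hα0, Finset.mul_sum, Finset.sum_mul, Finset.mul_sum]
        exact Finset.sum_congr rfl (fun ℓ _ => by ring)
    _ = α ^ w * ∑ ℓ ∈ Finset.range (K + 1), ∑ k ∈ Finset.Icc ℓ K,
          nuCoeff ℓ k * α ^ (-1 - (k : ℂ)) * p k * w ^ ℓ := by
        congr 1
        refine Finset.sum_comm' (fun k ℓ => ?_)
        simp only [Finset.mem_range, Finset.mem_Icc]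
        omega
    _ = α ^ w * ∑ k ∈ Finset.range (K + 1),
          (∑ ℓ ∈ Finset.Icc k K, nuCoeff k ℓ * α ^ (-1 - (ℓ : ℂ)) * p ℓ) * w ^ k := by
        congr 1
        refine Finset.sum_congr rfl (fun ℓ _ => ?_)
        rw [Finset.sum_mul]
end

section
/- Let K ∈ ℕ and let S be a Hermitian complex matrix of order K+1 (indices 0, …, K) such that S_{j,ℓ} = 0 whenever j + ℓ > K and S_{j,K−j} ≠ 0 for every j = 0, …, K. Let N_+(S) (resp. N_-(S)) be the number of positive (resp. negative) eigenvalues of S counted with multiplicity. Then: if K is odd, N_+(S) = N_-(S) = (K+1)/2; if K is even and S_{K/2,K/2} > 0, then N_+(S) = K/2 + 1 and N_-(S) = K/2; if K is even and S_{K/2,K/2} < 0, then N_+(S) = K/2 and N_-(S) = K/2 + 1. -/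
open Matrix Finset

namespace SkewInertiaAux

variable {n : ℕ}

/-- The Hermitian quadratic form of a matrix, as an explicit double sum. -/
noncomputable def qform (S : Matrix (Fin n) (Fin n) ℂ) (x : EuclideanSpace ℂ (Fin n)) : ℂ :=
  ∑ j, ∑ ℓ, (starRingEnd ℂ) (x j) * S j ℓ * x ℓ

lemma qform_eq_inner (S : Matrix (Fin n) (Fin n) ℂ) (x : EuclideanSpace ℂ (Fin n)) :
    qform S x = inner (𝕜 := ℂ) x (WithLp.toLp 2 (S.mulVec x) : EuclideanSpace ℂ (Fin n)) := by
  simp only [qform, PiLp.inner_apply, RCLike.inner_apply, Matrix.mulVec, dotProduct,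
    Finset.mul_sum, Finset.sum_mul, PiLp.toLp_apply]
  congr 1; funext j; congr 1; funext ℓ; ring

lemma spectral (S : Matrix (Fin n) (Fin n) ℂ) (hS : S.IsHermitian)
    (x : EuclideanSpace ℂ (Fin n)) :
    (qform S x).re = ∑ i, hS.eigenvalues i *
      ‖inner (𝕜 := ℂ) (hS.eigenvectorBasis i) x‖ ^ 2 := by
  set b := hS.eigenvectorBasis with hb
  have hx : (∑ i, inner (𝕜 := ℂ) (b i) x • b i) = x := b.sum_repr' x
  have hmv : (WithLp.toLp 2 (S.mulVec x) : EuclideanSpace ℂ (Fin n))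
      = ∑ i, ((hS.eigenvalues i : ℂ) * inner (𝕜 := ℂ) (b i) x) • (b i : EuclideanSpace ℂ (Fin n)) := by
    conv_lhs => rw [← hx]
    have : S.mulVec (WithLp.ofLp (∑ i, inner (𝕜 := ℂ) (b i) x • (b i : EuclideanSpace ℂ (Fin n))))
        = ∑ i, inner (𝕜 := ℂ) (b i) x • (S.mulVec (b i)) := by
      rw [WithLp.ofLp_sum]
      have := map_sum (S.mulVecLin) (fun i => WithLp.ofLp (inner (𝕜 := ℂ) (b i) x • (b i : EuclideanSpace ℂ (Fin n)))) Finset.univ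
      simp only [WithLp.ofLp_smul, _root_.map_smul, Matrix.mulVecLin_apply] at this
      exact this
    rw [this, WithLp.toLp_sum]
    refine Finset.sum_congr rfl fun i _ => ?_
    rw [hS.mulVec_eigenvectorBasis i]
    rw [RCLike.real_smul_eq_coe_smul (K := ℂ), smul_smul, mul_comm]
    rfl
  rw [qform_eq_inner, hmv, inner_sum]
  rw [Complex.re_sum]
  refine Finset.sum_congr rfl fun i _ => ?_
  rw [inner_smul_right, ← inner_conj_symm x (b i)]
  set c := inner (𝕜 := ℂ) (b i) x
  have : (hS.eigenvalues i : ℂ) * c * (starRingEnd ℂ) c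
      = ((hS.eigenvalues i * ‖c‖ ^ 2 : ℝ) : ℂ) := by
    rw [mul_assoc, Complex.mul_conj']
    push_cast
    ring
  rw [this, Complex.ofReal_re]

/-- Core dimension-counting lemma: if every vector supported on `T` whose
eigenbasis coordinates vanish on `A` is zero, then `#T ≤ #A`. -/
lemma card_le_of_coords (S : Matrix (Fin n) (Fin n) ℂ) (hS : S.IsHermitian)
    (T A : Finset (Fin n))
    (h : ∀ x : EuclideanSpace ℂ (Fin n), (∀ j, j ∉ T → x j = 0) →
      (∀ i ∈ A, inner (𝕜 := ℂ) (hS.eigenvectorBasis i) x = 0) → x = 0) :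
    T.card ≤ A.card := by
  classical
  set b := hS.eigenvectorBasis
  -- extension by zero, as a linear map
  let ext : ({j // j ∈ T} → ℂ) →ₗ[ℂ] EuclideanSpace ℂ (Fin n) :=
    { toFun := fun c => WithLp.toLp 2 (fun j => if hj : j ∈ T then c ⟨j, hj⟩ else 0)
      map_add' := by
        intro c d; ext j; by_cases hj : j ∈ T <;> simp [hj]
      map_smul' := by
        intro a c; ext j; by_cases hj : j ∈ T <;> simp [hj] }
  let L : ({j // j ∈ T} → ℂ) →ₗ[ℂ] ({i // i ∈ A} → ℂ) :=
    { toFun := fun c => fun i => inner (𝕜 := ℂ) (b i.1) (ext c)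
      map_add' := by intro c d; funext i; simp [inner_add_right]
      map_smul' := by intro a c; funext i; simp [inner_smul_right] }
  have hinj : Function.Injective L := by
    rw [← LinearMap.ker_eq_bot, LinearMap.ker_eq_bot']
    intro c hc
    have hsupp : ∀ j, j ∉ T → (ext c) j = 0 := by
      intro j hj; simp [ext, hj]
    have hcoord : ∀ i ∈ A, inner (𝕜 := ℂ) (b i) (ext c) = 0 := by
      intro i hi
      have := congrFun hc ⟨i, hi⟩
      simpa [L] using this
    have hz := h (ext c) hsupp hcoord
    funext j
    have := congrArg (fun y : EuclideanSpace ℂ (Fin n) => y j.1) hz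
    simpa [ext, j.2] using this
  have hrank := LinearMap.finrank_le_finrank_of_injective hinj
  simpa [Module.finrank_pi] using hrank

lemma exists_coord_ne_zero (S : Matrix (Fin n) (Fin n) ℂ) (hS : S.IsHermitian)
    {x : EuclideanSpace ℂ (Fin n)} (hx : x ≠ 0) :
    ∃ i, inner (𝕜 := ℂ) (hS.eigenvectorBasis i) x ≠ 0 := by
  by_contra hco
  push_neg at hco
  apply hx
  have := (hS.eigenvectorBasis.sum_repr' x).symm
  rw [this]
  exact Finset.sum_eq_zero fun i _ => by rw [hco i, zero_smul]

/-- If the form is nonnegative on vectors supported on `T` and all eigenvalues are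
nonzero, then `#T` is at most the number of positive eigenvalues. -/
lemma card_le_pos (S : Matrix (Fin n) (Fin n) ℂ) (hS : S.IsHermitian)
    (h0 : ∀ i, hS.eigenvalues i ≠ 0) (T : Finset (Fin n))
    (hT : ∀ x : EuclideanSpace ℂ (Fin n), (∀ j, j ∉ T → x j = 0) → 0 ≤ (qform S x).re) :
    T.card ≤ (Finset.univ.filter fun i => 0 < hS.eigenvalues i).card := by
  classical
  apply card_le_of_coords S hS
  intro x hsupp hco
  by_contra hx
  obtain ⟨i₀, hi₀⟩ := exists_coord_ne_zero S hS hx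
  have hi₀A : ¬ (0 < hS.eigenvalues i₀) := fun hp =>
    hi₀ (hco i₀ (by simp [hp]))
  have hneg : ∀ i : Fin n, ¬ (0 < hS.eigenvalues i) → hS.eigenvalues i < 0 :=
    fun i hi => (h0 i).lt_of_le (not_lt.mp hi)
  have hlt : (qform S x).re < 0 := by
    rw [spectral S hS x]
    have : ∀ i ∈ Finset.univ, hS.eigenvalues i *
        ‖inner (𝕜 := ℂ) (hS.eigenvectorBasis i) x‖ ^ 2 ≤ 0 := by
      intro i _
      by_cases hp : 0 < hS.eigenvalues i
      · rw [hco i (by simp [hp])]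
        simp
      · exact mul_nonpos_of_nonpos_of_nonneg (hneg i hp).le (by positivity)
    calc ∑ i, hS.eigenvalues i * ‖inner (𝕜 := ℂ) (hS.eigenvectorBasis i) x‖ ^ 2
        < ∑ _i : Fin n, (0 : ℝ) := by
          refine Finset.sum_lt_sum (fun i _ => this i (Finset.mem_univ i)) ⟨i₀, Finset.mem_univ _, ?_⟩
          have hn := hneg i₀ hi₀A
          have : (0:ℝ) < ‖inner (𝕜 := ℂ) (hS.eigenvectorBasis i₀) x‖ ^ 2 :=
            pow_pos (norm_pos_iff.mpr hi₀) 2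
          nlinarith
      _ = 0 := by simp
  exact absurd (hT x hsupp) (not_le.mpr hlt)

/-- If the form is nonpositive on vectors supported on `T` and all eigenvalues are
nonzero, then `#T` is at most the number of negative eigenvalues. -/
lemma card_le_neg (S : Matrix (Fin n) (Fin n) ℂ) (hS : S.IsHermitian)
    (h0 : ∀ i, hS.eigenvalues i ≠ 0) (T : Finset (Fin n))
    (hT : ∀ x : EuclideanSpace ℂ (Fin n), (∀ j, j ∉ T → x j = 0) → (qform S x).re ≤ 0) :
    T.card ≤ (Finset.univ.filter fun i => hS.eigenvalues i < 0).card := by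
  classical
  apply card_le_of_coords S hS
  intro x hsupp hco
  by_contra hx
  obtain ⟨i₀, hi₀⟩ := exists_coord_ne_zero S hS hx
  have hi₀A : ¬ (hS.eigenvalues i₀ < 0) := fun hp =>
    hi₀ (hco i₀ (by simp [hp]))
  have hpos : ∀ i : Fin n, ¬ (hS.eigenvalues i < 0) → 0 < hS.eigenvalues i :=
    fun i hi => (h0 i).symm.lt_of_le (not_lt.mp hi)
  have hlt : 0 < (qform S x).re := by
    rw [spectral S hS x]
    have : ∀ i ∈ Finset.univ, 0 ≤ hS.eigenvalues i *
        ‖inner (𝕜 := ℂ) (hS.eigenvectorBasis i) x‖ ^ 2 := by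
      intro i _
      by_cases hp : hS.eigenvalues i < 0
      · rw [hco i (by simp [hp])]
        simp
      · exact mul_nonneg (hpos i hp).le (by positivity)
    calc (0:ℝ) = ∑ _i : Fin n, (0 : ℝ) := by simp
      _ < ∑ i, hS.eigenvalues i * ‖inner (𝕜 := ℂ) (hS.eigenvectorBasis i) x‖ ^ 2 := by
          refine Finset.sum_lt_sum (fun i _ => this i (Finset.mem_univ i)) ⟨i₀, Finset.mem_univ _, ?_⟩
          have hn := hpos i₀ hi₀A
          have : (0:ℝ) < ‖inner (𝕜 := ℂ) (hS.eigenvectorBasis i₀) x‖ ^ 2 :=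
            pow_pos (norm_pos_iff.mpr hi₀) 2
          nlinarith
  exact absurd (hT x hsupp) (not_le.mpr hlt)

lemma det_ne_zero (K : ℕ) (S : Matrix (Fin (K + 1)) (Fin (K + 1)) ℂ)
    (hskew : ∀ j ℓ : Fin (K + 1), K < (j : ℕ) + (ℓ : ℕ) → S j ℓ = 0)
    (hdiag : ∀ j : Fin (K + 1),
      S j ⟨K - (j : ℕ), Nat.lt_succ_of_le (Nat.sub_le K j)⟩ ≠ 0) :
    S.det ≠ 0 := by
  classical
  have hinv : Function.Involutive
      (fun j : Fin (K + 1) => (⟨K - (j : ℕ), Nat.lt_succ_of_le (Nat.sub_le K j)⟩ : Fin (K+1))) := by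
    intro j
    have hj : (j : ℕ) ≤ K := Nat.lt_succ_iff.mp j.isLt
    exact Fin.ext (by simp [Nat.sub_sub_self hj])
  set σ₀ : Equiv.Perm (Fin (K + 1)) := hinv.toPerm _ with hσ₀
  have hterm : ∀ σ : Equiv.Perm (Fin (K + 1)), σ ≠ σ₀ → (∏ i, S (σ i) i) = 0 := by
    intro σ hσ
    have hex : ∃ j : Fin (K + 1), K < (σ j : ℕ) + (j : ℕ) := by
      by_contra hall
      push_neg at hall
      have hsum : ∑ j : Fin (K + 1), ((σ j : ℕ) + (j : ℕ)) = (K + 1) * K := by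
        rw [Finset.sum_add_distrib]
        rw [Equiv.sum_comp σ (fun j : Fin (K+1) => (j : ℕ))]
        have h1 : ∑ j : Fin (K + 1), (j : ℕ) = ∑ i ∈ Finset.range (K + 1), i :=
          Fin.sum_univ_eq_sum_range (fun i => i) (K + 1)
        have h2 : (∑ i ∈ Finset.range (K + 1), i) * 2 = (K + 1) * K := by
          rw [Finset.sum_range_id_mul_two]
          simp
        omega
      have heq : ∀ j : Fin (K + 1), (σ j : ℕ) + (j : ℕ) = K := by
        by_contra hne
        push_neg at hne
        obtain ⟨j₀, hj₀⟩ := hne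
        have hlt : ∑ j : Fin (K + 1), ((σ j : ℕ) + (j : ℕ))
            < ∑ _j : Fin (K + 1), K := by
          refine Finset.sum_lt_sum (fun j _ => hall j) ⟨j₀, Finset.mem_univ _, ?_⟩
          exact lt_of_le_of_ne (hall j₀) hj₀
        simp only [Finset.sum_const, Finset.card_univ, Fintype.card_fin, smul_eq_mul] at hlt
        omega
      apply hσ
      ext j
      have := heq j
      have hj : (j : ℕ) ≤ K := Nat.lt_succ_iff.mp j.isLt
      show (σ j : ℕ) = ((σ₀ j : Fin (K+1)) : ℕ)
      simp only [hσ₀, Function.Involutive.coe_toPerm]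
      omega
    obtain ⟨j, hj⟩ := hex
    exact Finset.prod_eq_zero (Finset.mem_univ j) (hskew (σ j) j hj)
  have hdet : S.det = Equiv.Perm.sign σ₀ • ∏ i, S (σ₀ i) i := by
    rw [Matrix.det_apply]
    refine Finset.sum_eq_single σ₀ (fun σ _ hσ => ?_) (fun h => absurd (Finset.mem_univ _) h)
    rw [hterm σ hσ, smul_zero]
  have hprod : (∏ i, S (σ₀ i) i) ≠ 0 := by
    rw [Finset.prod_ne_zero_iff]
    intro i _
    have hi : (i : ℕ) ≤ K := Nat.lt_succ_iff.mp i.isLt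
    have := hdiag (σ₀ i)
    have hcoe : (⟨K - ((σ₀ i : Fin (K+1)) : ℕ), Nat.lt_succ_of_le (Nat.sub_le K _)⟩ : Fin (K+1)) = i := by
      apply Fin.ext
      show K - ((σ₀ i : Fin (K+1)) : ℕ) = (i : ℕ)
      have : ((σ₀ i : Fin (K+1)) : ℕ) = K - (i : ℕ) := by
        simp only [hσ₀, Function.Involutive.coe_toPerm]
      omega
    rwa [hcoe] at this
  rw [hdet]
  rcases Int.units_eq_one_or (Equiv.Perm.sign σ₀) with h | h <;>
    simp [h, Units.smul_def, hprod]

end SkewInertiaAux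

open SkewInertiaAux

/-- **Inertia of a Hermitian skew-triangular matrix with nonvanishing skew diagonal.**
Let `S` be Hermitian of order `K+1` with `S j ℓ = 0` for `j + ℓ > K` and
`S j (K−j) ≠ 0` for all `j`.  If `K` is odd then `S` has `(K+1)/2` positive and `(K+1)/2`
negative eigenvalues; if `K` is even and the middle entry is positive (resp. negative)
then `S` has `K/2+1` positive and `K/2` negative (resp. `K/2` positive and `K/2+1`
negative) eigenvalues, counted with multiplicity. -/
theorem skew_triangular_inertia (K : ℕ) (S : Matrix (Fin (K + 1)) (Fin (K + 1)) ℂ)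
    (hS : S.IsHermitian)
    (hskew : ∀ j ℓ : Fin (K + 1), K < (j : ℕ) + (ℓ : ℕ) → S j ℓ = 0)
    (hdiag : ∀ j : Fin (K + 1),
      S j ⟨K - (j : ℕ), Nat.lt_succ_of_le (Nat.sub_le K j)⟩ ≠ 0) :
    (Odd K →
      (Finset.univ.filter fun i => 0 < hS.eigenvalues i).card = (K + 1) / 2 ∧
      (Finset.univ.filter fun i => hS.eigenvalues i < 0).card = (K + 1) / 2) ∧
    (Even K → 0 < (S ⟨K / 2, Nat.lt_succ_of_le (Nat.div_le_self K 2)⟩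
        ⟨K / 2, Nat.lt_succ_of_le (Nat.div_le_self K 2)⟩).re →
      (Finset.univ.filter fun i => 0 < hS.eigenvalues i).card = K / 2 + 1 ∧
      (Finset.univ.filter fun i => hS.eigenvalues i < 0).card = K / 2) ∧
    (Even K → (S ⟨K / 2, Nat.lt_succ_of_le (Nat.div_le_self K 2)⟩
        ⟨K / 2, Nat.lt_succ_of_le (Nat.div_le_self K 2)⟩).re < 0 →
      (Finset.univ.filter fun i => 0 < hS.eigenvalues i).card = K / 2 ∧
      (Finset.univ.filter fun i => hS.eigenvalues i < 0).card = K / 2 + 1) := by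
  classical
  set mid : Fin (K + 1) := ⟨K / 2, Nat.lt_succ_of_le (Nat.div_le_self K 2)⟩ with hmid_def
  have hdet : S.det ≠ 0 := det_ne_zero K S hskew hdiag
  have h0 : ∀ i, hS.eigenvalues i ≠ 0 := by
    intro i hi
    apply hdet
    rw [hS.det_eq_prod_eigenvalues]
    exact Finset.prod_eq_zero (Finset.mem_univ i) (by rw [hi]; simp)
  set P := Finset.univ.filter fun i => 0 < hS.eigenvalues i with hP
  set N := Finset.univ.filter fun i => hS.eigenvalues i < 0 with hN
  have hPN : P.card + N.card = K + 1 := by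
    have hNeq : N = Finset.univ.filter (fun i => ¬ 0 < hS.eigenvalues i) := by
      ext i
      simp only [hN, Finset.mem_filter, Finset.mem_univ, true_and, not_lt]
      exact ⟨le_of_lt, fun h => lt_of_le_of_ne h (h0 i)⟩
    rw [hP, hNeq, Finset.card_filter_add_card_filter_not]
    simp
  have hcard : ∀ t : ℕ, (Finset.univ.filter fun j : Fin (K+1) => t ≤ (j:ℕ)).card
      = K + 1 - t := by
    intro t
    rcases Nat.lt_or_ge t (K+1) with h | h
    · have : (Finset.univ.filter fun j : Fin (K+1) => t ≤ (j:ℕ))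
          = Finset.Ici (⟨t, h⟩ : Fin (K+1)) := by
        ext j; simp [Fin.le_def]
      rw [this, Fin.card_Ici]
    · have : (Finset.univ.filter fun j : Fin (K+1) => t ≤ (j:ℕ)) = ∅ := by
        ext j
        simp only [Finset.mem_filter, Finset.mem_univ, true_and, Finset.notMem_empty,
          iff_false, not_le]
        omega
      rw [this]
      simp
      omega
  have hiso : ∀ t : ℕ, K < 2 * t →
      ∀ x : EuclideanSpace ℂ (Fin (K+1)),
        (∀ j, j ∉ (Finset.univ.filter fun j : Fin (K+1) => t ≤ (j:ℕ)) → x j = 0) →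
        qform S x = 0 := by
    intro t ht x hsupp
    refine Finset.sum_eq_zero fun j _ => Finset.sum_eq_zero fun ℓ _ => ?_
    by_cases hxj : x j = 0
    · simp [hxj]
    by_cases hxl : x ℓ = 0
    · simp [hxl]
    have hj : t ≤ (j:ℕ) := by
      by_contra hc
      exact hxj (hsupp j (by simp [hc]))
    have hl : t ≤ (ℓ:ℕ) := by
      by_contra hc
      exact hxl (hsupp ℓ (by simp [hc]))
    rw [hskew j ℓ (by omega)]
    ring
  have hsemi : Even K → ∀ x : EuclideanSpace ℂ (Fin (K+1)),
      (∀ j, j ∉ (Finset.univ.filter fun j : Fin (K+1) => K/2 ≤ (j:ℕ)) → x j = 0) →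
      (qform S x).re = (S mid mid).re * Complex.normSq (x mid) := by
    intro hev x hsupp
    obtain ⟨m, hm⟩ := hev
    have hmid : (mid : ℕ) = K / 2 := rfl
    have hterm : ∀ j ℓ : Fin (K+1), ¬ (j = mid ∧ ℓ = mid) →
        (starRingEnd ℂ) (x j) * S j ℓ * x ℓ = 0 := by
      intro j ℓ hne
      by_cases hxj : x j = 0
      · simp [hxj]
      by_cases hxl : x ℓ = 0
      · simp [hxl]
      have hj : K / 2 ≤ (j:ℕ) := by
        by_contra hc
        exact hxj (hsupp j (by simp [hc]))
      have hl : K / 2 ≤ (ℓ:ℕ) := by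
        by_contra hc
        exact hxl (hsupp ℓ (by simp [hc]))
      have hne' : (j : ℕ) ≠ K / 2 ∨ (ℓ : ℕ) ≠ K / 2 := by
        by_contra hc
        push_neg at hc
        exact hne ⟨Fin.ext (hc.1.trans hmid.symm), Fin.ext (hc.2.trans hmid.symm)⟩
      rw [hskew j ℓ (by omega)]
      ring
    have hq : qform S x = (starRingEnd ℂ) (x mid) * S mid mid * x mid := by
      unfold qform
      rw [Finset.sum_eq_single mid]
      · rw [Finset.sum_eq_single mid]
        · intro ℓ _ hℓ
          exact hterm mid ℓ (fun h => hℓ h.2)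
        · intro h
          exact absurd (Finset.mem_univ _) h
      · intro j _ hj
        exact Finset.sum_eq_zero fun ℓ _ => hterm j ℓ (fun h => hj h.1)
      · intro h
        exact absurd (Finset.mem_univ _) h
    have hreal : ((S mid mid).re : ℂ) = S mid mid :=
      Complex.conj_eq_iff_re.mp (hS.apply mid mid)
    rw [hq]
    have : (starRingEnd ℂ) (x mid) * S mid mid * x mid
        = (((S mid mid).re * Complex.normSq (x mid) : ℝ) : ℂ) := by
      calc (starRingEnd ℂ) (x mid) * S mid mid * x mid
          = S mid mid * (x mid * (starRingEnd ℂ) (x mid)) := by ring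
        _ = ((S mid mid).re : ℂ) * ((Complex.normSq (x mid) : ℝ) : ℂ) := by
            rw [Complex.mul_conj, hreal]
        _ = (((S mid mid).re * Complex.normSq (x mid) : ℝ) : ℂ) := by push_cast; ring
    rw [this, Complex.ofReal_re]
  refine ⟨?_, ?_, ?_⟩
  · intro hodd
    obtain ⟨m, hm⟩ := hodd
    have hT := hcard (m + 1)
    have hle1 : K + 1 - (m + 1) ≤ P.card := by
      rw [← hT]
      exact card_le_pos S hS h0 _ (fun x hx => by rw [hiso (m+1) (by omega) x hx]; simp)
    have hle2 : K + 1 - (m + 1) ≤ N.card := by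
      rw [← hT]
      exact card_le_neg S hS h0 _ (fun x hx => by rw [hiso (m+1) (by omega) x hx]; simp)
    constructor <;> omega
  · intro hev hpos
    obtain ⟨m, hm⟩ := hev
    have hT2 := hcard (K / 2)
    have hT1 := hcard (K / 2 + 1)
    have hle1 : K + 1 - K / 2 ≤ P.card := by
      rw [← hT2]
      refine card_le_pos S hS h0 _ (fun x hx => ?_)
      rw [hsemi ⟨m, hm⟩ x hx]
      exact mul_nonneg hpos.le (Complex.normSq_nonneg _)
    have hle2 : K + 1 - (K / 2 + 1) ≤ N.card := by
      rw [← hT1]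
      exact card_le_neg S hS h0 _ (fun x hx => by rw [hiso (K/2+1) (by omega) x hx]; simp)
    constructor <;> omega
  · intro hev hneg
    obtain ⟨m, hm⟩ := hev
    have hT2 := hcard (K / 2)
    have hT1 := hcard (K / 2 + 1)
    have hle1 : K + 1 - K / 2 ≤ N.card := by
      rw [← hT2]
      refine card_le_neg S hS h0 _ (fun x hx => ?_)
      rw [hsemi ⟨m, hm⟩ x hx]
      exact mul_nonpos_of_nonpos_of_nonneg hneg.le (Complex.normSq_nonneg _)
    have hle2 : K + 1 - (K / 2 + 1) ≤ P.card := by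
      rw [← hT1]
      exact card_le_pos S hS h0 _ (fun x hx => by rw [hiso (K/2+1) (by omega) x hx]; simp)
    constructor <;> omega
end

section
/- Let β₁, …, β_M ∈ ℂ be pairwise distinct and K₁, …, K_M ∈ ℕ. Then there exist functions ψ_{k,m} ∈ 𝒵, for m = 1, …, M and k = 0, …, K_m, such that the l-th complex derivative satisfies ψ_{k,m}^{(l)}(β_n) = δ_{m,n} δ_{k,l} for all n = 1, …, M and l = 0, …, K_m. -/
open MeasureTheory Complex Metric Set Function
open scoped Matrix

set_option linter.unusedSectionVars false

/-- The class `𝒵`: entire functions `φ : ℂ → ℂ` such that for some `r > 0` and every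
`n ∈ ℕ` there is a constant `C_n` with `|φ(z)| ≤ C_n (1+|z|)^{−n} e^{r|Im z|}`. -/
def MemZClass (φ : ℂ → ℂ) : Prop :=
  Differentiable ℂ φ ∧
    ∃ r : ℝ, 0 < r ∧ ∀ n : ℕ, ∃ C : ℝ, ∀ z : ℂ,
      ‖φ z‖ ≤ C * ((1 + ‖z‖) ^ n)⁻¹ * Real.exp (r * |z.im|)

noncomputable section

namespace ZClassProof

/-! ### Part 1: a smooth bump and its Fourier-type transform -/

variable (g : ℝ → ℝ)

def PW (z : ℂ) : ℂ := ∫ t : ℝ, (g t : ℂ) * Complex.exp (Complex.I * t * z)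

def PWn (n : ℕ) (z : ℂ) : ℂ :=
  ∫ t : ℝ, Complex.ofReal (iteratedDeriv n g t) * Complex.exp (Complex.I * t * z)

variable {g} (hg : ContDiff ℝ (⊤ : ℕ∞) g) (hsupp : ∀ t : ℝ, (1:ℝ)/2 ≤ |t| → g t = 0)

section basic
include hg hsupp

lemma iter_supp (n : ℕ) : ∀ t : ℝ, (1:ℝ) ≤ |t| → iteratedDeriv n g t = 0 := by
  intro t ht
  have hev : g =ᶠ[nhds t] (fun _ => (0:ℝ)) := by
    have : Metric.ball t ((1:ℝ)/4) ∈ nhds t := Metric.ball_mem_nhds t (by norm_num)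
    filter_upwards [this] with s hs
    apply hsupp
    have h3 : |s - t| < 1/4 := by simpa [Real.dist_eq] using hs
    have h2 : |t - s| = |s - t| := abs_sub_comm t s
    have h1 := abs_sub_abs_le_abs_sub t s
    rw [h2] at h1
    linarith
  calc iteratedDeriv n g t = iteratedDeriv n (fun _ => (0:ℝ)) t :=
        Filter.EventuallyEq.iteratedDeriv_eq n hev
    _ = 0 := by
      induction n with
      | zero => simp
      | succ n ih => rw [iteratedDeriv_succ']; simpa using ih

lemma iter_compsupp (n : ℕ) : HasCompactSupport (iteratedDeriv n g) := by
  apply HasCompactSupport.intro (isCompact_Icc (a := -(1:ℝ)) (b := 1))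
  intro t ht
  apply iter_supp hg hsupp n
  simp only [Set.mem_Icc, not_and_or, not_le] at ht
  rcases ht with h | h
  · rw [abs_of_neg (by linarith)]; linarith
  · rw [abs_of_pos (by linarith)]; linarith

lemma iter_cont (n : ℕ) : Continuous (iteratedDeriv n g) :=
  hg.continuous_iteratedDeriv n (by exact_mod_cast le_top)

lemma iter_integrable (n : ℕ) : Integrable (fun t => iteratedDeriv n g t) :=
  (iter_cont hg hsupp n).integrable_of_hasCompactSupport (iter_compsupp hg hsupp n)

end basic

lemma cont_exp (z : ℂ) : Continuous fun t : ℝ => Complex.exp (Complex.I * t * z) :=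
  Complex.continuous_exp.comp (by continuity)

lemma integrable_mul_exp {G : ℝ → ℝ} (hGc : Continuous G) (hGs : HasCompactSupport G)
    {v : ℝ → ℂ} (hv : Continuous v) : Integrable (fun t : ℝ => (G t : ℂ) * v t) := by
  apply Continuous.integrable_of_hasCompactSupport
  · exact (Complex.continuous_ofReal.comp hGc).mul hv
  · apply HasCompactSupport.intro hGs.isCompact
    intro t ht
    have : G t = 0 := image_eq_zero_of_notMem_tsupport ht
    simp [this]

lemma exp_t_hasDerivAt (z : ℂ) (t : ℝ) :
    HasDerivAt (fun s : ℝ => Complex.exp (Complex.I * s * z))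
      (Complex.I * z * Complex.exp (Complex.I * t * z)) t := by
  have h0 : HasDerivAt (fun w : ℂ => Complex.I * w * z)
      (Complex.I * z) (t : ℂ) := by
    simpa [mul_right_comm] using ((hasDerivAt_id (t:ℂ)).const_mul (Complex.I * z))
  have h2 : HasDerivAt (fun w : ℂ => Complex.exp (Complex.I * w * z))
      (Complex.I * z * Complex.exp (Complex.I * t * z)) (t : ℂ) := by
    simpa [mul_comm] using h0.cexp
  exact h2.comp_ofReal

lemma exp_z_hasDerivAt (t : ℝ) (z : ℂ) :
    HasDerivAt (fun w : ℂ => Complex.exp (Complex.I * t * w))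
      (Complex.I * t * Complex.exp (Complex.I * t * z)) z := by
  have h0 : HasDerivAt (fun w : ℂ => Complex.I * t * w) (Complex.I * t) z := by
    simpa using (hasDerivAt_id z).const_mul (Complex.I * (t:ℂ))
  simpa [mul_comm] using h0.cexp

lemma abs_exp_le {z : ℂ} {t : ℝ} (ht : |t| ≤ 1) :
    ‖Complex.exp (Complex.I * t * z)‖ ≤ Real.exp |z.im| := by
  rw [Complex.norm_exp]
  apply Real.exp_le_exp.2
  have h : (Complex.I * t * z).re = -(t * z.im) := by
    simp [Complex.mul_re, Complex.mul_im]
  rw [h]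
  calc -(t * z.im) ≤ |t * z.im| := neg_le_abs _
    _ = |t| * |z.im| := abs_mul _ _
    _ ≤ 1 * |z.im| := mul_le_mul_of_nonneg_right ht (abs_nonneg _)
    _ = |z.im| := one_mul _

lemma PW_eq_PWn0 : PW g = PWn g 0 := by
  funext z; simp [PW, PWn, iteratedDeriv_zero]

section core
include hg hsupp

lemma PW_hasDerivAt (z₀ : ℂ) :
    HasDerivAt (PW g)
      (∫ t : ℝ, (g t : ℂ) * (Complex.I * t * Complex.exp (Complex.I * t * z₀))) z₀ := by
  have key := hasDerivAt_integral_of_dominated_loc_of_deriv_le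
    (F := fun (z : ℂ) (t : ℝ) => (g t : ℂ) * Complex.exp (Complex.I * t * z))
    (F' := fun (z : ℂ) (t : ℝ) => (g t : ℂ) * (Complex.I * t * Complex.exp (Complex.I * t * z)))
    (x₀ := z₀) (bound := fun t : ℝ => |g t| * Real.exp (|z₀.im| + 1))
    (μ := volume) (s := Metric.ball z₀ 1) (Metric.ball_mem_nhds z₀ zero_lt_one) ?_ ?_ ?_ ?_ ?_ ?_
  · exact key.2
  · apply Filter.Eventually.of_forall
    intro z
    exact ((Complex.continuous_ofReal.comp hg.continuous).mul (cont_exp z)).aestronglyMeasurable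
  · exact integrable_mul_exp hg.continuous
      (by simpa [iteratedDeriv_zero] using iter_compsupp hg hsupp 0) (cont_exp z₀)
  · apply Continuous.aestronglyMeasurable
    exact (Complex.continuous_ofReal.comp hg.continuous).mul
      ((continuous_const.mul Complex.continuous_ofReal).mul (cont_exp z₀))
  · apply Filter.Eventually.of_forall
    intro t z hz
    by_cases hgt : g t = 0
    · simp only [hgt, Complex.ofReal_zero, zero_mul, norm_zero, abs_zero]
      positivity
    · have ht : |t| ≤ 1 := by
        by_contra hc
        exact hgt (hsupp t (by linarith [not_le.mp hc]))
      have him : |z.im| ≤ |z₀.im| + 1 := by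
        have h1 : |(z - z₀).im| ≤ ‖z - z₀‖ := Complex.abs_im_le_norm _
        have h2 : ‖z - z₀‖ < 1 := by
          simpa [Complex.dist_eq] using mem_ball.mp hz
        have h3 : |z.im| - |z₀.im| ≤ |z.im - z₀.im| := abs_sub_abs_le_abs_sub _ _
        simp only [Complex.sub_im] at h1
        linarith
      calc ‖(g t : ℂ) * (Complex.I * t * Complex.exp (Complex.I * t * z))‖
          = |g t| * (|t| * ‖Complex.exp (Complex.I * t * z)‖) := by
            simp
        _ ≤ |g t| * (1 * Real.exp |z.im|) :=
            mul_le_mul_of_nonneg_left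
              (mul_le_mul ht (abs_exp_le ht) (norm_nonneg _) one_pos.le)
              (abs_nonneg _)
        _ = |g t| * Real.exp |z.im| := by ring
        _ ≤ |g t| * Real.exp (|z₀.im| + 1) :=
            mul_le_mul_of_nonneg_left (Real.exp_le_exp.2 (by linarith)) (abs_nonneg _)
  · apply Integrable.mul_const
    exact (iter_integrable hg hsupp 0).abs.congr (by simp [iteratedDeriv_zero])
  · apply Filter.Eventually.of_forall
    intro t z _
    exact (exp_z_hasDerivAt t z).const_mul ((g t : ℂ))

lemma PW_differentiable : Differentiable ℂ (PW g) :=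
  fun z => (PW_hasDerivAt hg hsupp z).differentiableAt

lemma ibp (n : ℕ) (z : ℂ) : PWn g (n + 1) z = -(Complex.I * z) * PWn g n z := by
  have hu : ∀ t : ℝ, HasDerivAt (fun s : ℝ => Complex.ofReal (iteratedDeriv n g s))
      (Complex.ofReal (iteratedDeriv (n + 1) g t)) t := by
    intro t
    have hdiff : Differentiable ℝ (iteratedDeriv n g) :=
      hg.differentiable_iteratedDeriv n (by exact_mod_cast WithTop.coe_lt_top n)
    have hd : HasDerivAt (iteratedDeriv n g) (iteratedDeriv (n + 1) g t) t := by
      rw [iteratedDeriv_succ]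
      exact (hdiff t).hasDerivAt
    exact hd.ofReal_comp
  have hv : ∀ t : ℝ, HasDerivAt (fun s : ℝ => Complex.exp (Complex.I * s * z))
      (Complex.I * z * Complex.exp (Complex.I * t * z)) t := exp_t_hasDerivAt z
  have huv' : Integrable ((fun t : ℝ => Complex.ofReal (iteratedDeriv n g t)) *
      (fun t : ℝ => Complex.I * z * Complex.exp (Complex.I * t * z))) := by
    exact integrable_mul_exp (iter_cont hg hsupp n) (iter_compsupp hg hsupp n)
      (continuous_const.mul (cont_exp z))
  have hu'v : Integrable ((fun t : ℝ => Complex.ofReal (iteratedDeriv (n + 1) g t)) *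
      (fun t : ℝ => Complex.exp (Complex.I * t * z))) := by
    exact integrable_mul_exp (iter_cont hg hsupp (n + 1)) (iter_compsupp hg hsupp (n + 1))
      (cont_exp z)
  have huv : Integrable ((fun t : ℝ => Complex.ofReal (iteratedDeriv n g t)) *
      (fun t : ℝ => Complex.exp (Complex.I * t * z))) := by
    exact integrable_mul_exp (iter_cont hg hsupp n) (iter_compsupp hg hsupp n) (cont_exp z)
  have h := integral_mul_deriv_eq_deriv_mul_of_integrable (fun t _ => hu t) (fun t _ => hv t) huv' hu'v huv
  have hL : ∫ t : ℝ, Complex.ofReal (iteratedDeriv n g t) *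
      (Complex.I * z * Complex.exp (Complex.I * t * z)) = Complex.I * z * PWn g n z := by
    rw [show (fun t : ℝ => Complex.ofReal (iteratedDeriv n g t) *
        (Complex.I * z * Complex.exp (Complex.I * t * z))) = fun t : ℝ =>
        Complex.I * z * (Complex.ofReal (iteratedDeriv n g t) *
          Complex.exp (Complex.I * t * z)) from funext fun t => by ring]
    exact integral_const_mul _ _
  rw [hL] at h
  have h2 : PWn g (n + 1) z = ∫ t : ℝ, Complex.ofReal (iteratedDeriv (n + 1) g t) *
      Complex.exp (Complex.I * t * z) := rfl
  rw [h2, ← neg_neg (∫ t : ℝ, Complex.ofReal (iteratedDeriv (n + 1) g t) *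
      Complex.exp (Complex.I * t * z)), ← h]
  ring

lemma PWn_bound (n : ℕ) (z : ℂ) :
    ‖PWn g n z‖ ≤ (∫ t : ℝ, |iteratedDeriv n g t|) * Real.exp |z.im| := by
  have hb : Integrable (fun t : ℝ => |iteratedDeriv n g t| * Real.exp |z.im|) :=
    ((iter_integrable hg hsupp n).abs).mul_const _
  calc ‖PWn g n z‖ ≤ ∫ t : ℝ, |iteratedDeriv n g t| * Real.exp |z.im| := by
        apply norm_integral_le_of_norm_le hb
        apply Filter.Eventually.of_forall
        intro t
        rcases le_or_gt |t| 1 with ht | ht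
        · calc ‖Complex.ofReal (iteratedDeriv n g t) * Complex.exp (Complex.I * t * z)‖
              = |iteratedDeriv n g t| * ‖Complex.exp (Complex.I * t * z)‖ := by
                simp
            _ ≤ |iteratedDeriv n g t| * Real.exp |z.im| :=
                mul_le_mul_of_nonneg_left (abs_exp_le ht) (abs_nonneg _)
        · rw [iter_supp hg hsupp n t ht.le]
          simp only [Complex.ofReal_zero, zero_mul, norm_zero, abs_zero]
          positivity
    _ = (∫ t : ℝ, |iteratedDeriv n g t|) * Real.exp |z.im| := integral_mul_const _ _

lemma abs_PW_decay (n : ℕ) (z : ℂ) :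
    ‖z‖ ^ n * ‖PW g z‖ = ‖PWn g n z‖ := by
  induction n with
  | zero => rw [PW_eq_PWn0]; simp
  | succ n ih =>
    rw [ibp hg hsupp n z]
    rw [norm_mul]
    have : ‖-(Complex.I * z)‖ = ‖z‖ := by
      simp
    rw [this, ← ih, pow_succ]
    ring

lemma PW_memZ : MemZClass (PW g) := by
  refine ⟨PW_differentiable hg hsupp, 1, one_pos, fun n => ?_⟩
  set A : ℕ → ℝ := fun j => ∫ t : ℝ, |iteratedDeriv j g t| with hA
  have hA0 : ∀ j, 0 ≤ A j := fun j => integral_nonneg fun t => abs_nonneg _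
  refine ⟨2 ^ n * (A 0 + A n), fun z => ?_⟩
  have hX : (0:ℝ) < (1 + ‖z‖) ^ n := by positivity
  have key : (1 + ‖z‖) ^ n * ‖PW g z‖
      ≤ 2 ^ n * (A 0 + A n) * Real.exp |z.im| := by
    rcases le_or_gt (‖z‖) 1 with hz | hz
    · have h1 : (1 + ‖z‖) ^ n ≤ 2 ^ n := by
        apply pow_le_pow_left₀ (by positivity)
        linarith
      have h2 : ‖PW g z‖ ≤ A 0 * Real.exp |z.im| := by
        have h := PWn_bound hg hsupp 0 z
        rwa [PW_eq_PWn0 (g := g)]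
      calc (1 + ‖z‖) ^ n * ‖PW g z‖
          ≤ 2 ^ n * (A 0 * Real.exp |z.im|) := by
            apply mul_le_mul h1 h2 (norm_nonneg _) (by positivity)
        _ ≤ 2 ^ n * (A 0 + A n) * Real.exp |z.im| := by
            rw [← mul_assoc]
            gcongr
            linarith [hA0 n]
    · have h1 : (1 + ‖z‖) ^ n ≤ 2 ^ n * ‖z‖ ^ n := by
        rw [← mul_pow]
        apply pow_le_pow_left₀ (by positivity)
        linarith
      calc (1 + ‖z‖) ^ n * ‖PW g z‖
          ≤ 2 ^ n * ‖z‖ ^ n * ‖PW g z‖ := by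
            apply mul_le_mul_of_nonneg_right h1 (norm_nonneg _)
        _ = 2 ^ n * ‖PWn g n z‖ := by
            rw [mul_assoc, abs_PW_decay hg hsupp n z]
        _ ≤ 2 ^ n * (A n * Real.exp |z.im|) := by
            gcongr
            exact PWn_bound hg hsupp n z
        _ ≤ 2 ^ n * (A 0 + A n) * Real.exp |z.im| := by
            rw [← mul_assoc]
            gcongr
            linarith [hA0 0]
  calc ‖PW g z‖
      = ((1 + ‖z‖) ^ n * ‖PW g z‖) * ((1 + ‖z‖) ^ n)⁻¹ := by
        field_simp
    _ ≤ (2 ^ n * (A 0 + A n) * Real.exp |z.im|) * ((1 + ‖z‖) ^ n)⁻¹ := by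
        apply mul_le_mul_of_nonneg_right key (by positivity)
    _ = 2 ^ n * (A 0 + A n) * ((1 + ‖z‖) ^ n)⁻¹ * Real.exp (1 * |z.im|) := by
        rw [one_mul]; ring

lemma PW_zero (hgint : ∫ t : ℝ, g t = 1) : PW g 0 = 1 := by
  have : PW g 0 = ∫ t : ℝ, (g t : ℂ) := by
    unfold PW
    congr 1
    funext t
    simp
  rw [this]
  have h2 : ∫ t : ℝ, (g t : ℂ) = ((∫ t : ℝ, g t : ℝ) : ℂ) := integral_ofReal
  rw [h2, hgint, Complex.ofReal_one]

end core

/-! ### Part 2: closure properties of the class `𝒵` -/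

section closure

variable {f f₁ f₂ : ℂ → ℂ}

lemma memZ_C_nonneg {r : ℝ} {n : ℕ} {C : ℝ}
    (h : ∀ z : ℂ, ‖f z‖ ≤ C * ((1 + ‖z‖) ^ n)⁻¹ * Real.exp (r * |z.im|)) :
    ∀ z : ℂ, ‖f z‖ ≤ max C 0 * ((1 + ‖z‖) ^ n)⁻¹ * Real.exp (r * |z.im|) := by
  intro z
  refine (h z).trans ?_
  have : (0:ℝ) ≤ ((1 + ‖z‖) ^ n)⁻¹ * Real.exp (r * |z.im|) := by positivity
  calc C * ((1 + ‖z‖) ^ n)⁻¹ * Real.exp (r * |z.im|)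
      = C * (((1 + ‖z‖) ^ n)⁻¹ * Real.exp (r * |z.im|)) := by ring
    _ ≤ max C 0 * (((1 + ‖z‖) ^ n)⁻¹ * Real.exp (r * |z.im|)) :=
        mul_le_mul_of_nonneg_right (le_max_left _ _) this
    _ = max C 0 * ((1 + ‖z‖) ^ n)⁻¹ * Real.exp (r * |z.im|) := by ring

lemma memZ_zero : MemZClass (fun _ : ℂ => 0) := by
  refine ⟨differentiable_const 0, 1, one_pos, fun n => ⟨0, fun z => ?_⟩⟩
  simp

lemma memZ_add (h₁ : MemZClass f₁) (h₂ : MemZClass f₂) :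
    MemZClass (fun z => f₁ z + f₂ z) := by
  obtain ⟨hd₁, r₁, hr₁, hC₁⟩ := h₁
  obtain ⟨hd₂, r₂, hr₂, hC₂⟩ := h₂
  refine ⟨hd₁.add hd₂, max r₁ r₂, lt_max_of_lt_left hr₁, fun n => ?_⟩
  obtain ⟨C₁, h1⟩ := hC₁ n
  obtain ⟨C₂, h2⟩ := hC₂ n
  refine ⟨max C₁ 0 + max C₂ 0, fun z => ?_⟩
  have e1 : Real.exp (r₁ * |z.im|) ≤ Real.exp (max r₁ r₂ * |z.im|) :=
    Real.exp_le_exp.2 (mul_le_mul_of_nonneg_right (le_max_left _ _) (abs_nonneg _))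
  have e2 : Real.exp (r₂ * |z.im|) ≤ Real.exp (max r₁ r₂ * |z.im|) :=
    Real.exp_le_exp.2 (mul_le_mul_of_nonneg_right (le_max_right _ _) (abs_nonneg _))
  have b1 := memZ_C_nonneg h1 z
  have b2 := memZ_C_nonneg h2 z
  have step : ∀ (C r' : ℝ), 0 ≤ C → Real.exp (r' * |z.im|) ≤ Real.exp (max r₁ r₂ * |z.im|) →
      C * ((1 + ‖z‖) ^ n)⁻¹ * Real.exp (r' * |z.im|) ≤
      C * ((1 + ‖z‖) ^ n)⁻¹ * Real.exp (max r₁ r₂ * |z.im|) := by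
    intro C r' hC he
    apply mul_le_mul_of_nonneg_left he (by positivity)
  calc ‖f₁ z + f₂ z‖ ≤ ‖f₁ z‖ + ‖f₂ z‖ :=
        norm_add_le _ _
    _ ≤ max C₁ 0 * ((1 + ‖z‖) ^ n)⁻¹ * Real.exp (max r₁ r₂ * |z.im|)
        + max C₂ 0 * ((1 + ‖z‖) ^ n)⁻¹ * Real.exp (max r₁ r₂ * |z.im|) :=
        add_le_add (b1.trans (step _ _ (le_max_right _ _) e1))
          (b2.trans (step _ _ (le_max_right _ _) e2))
    _ = (max C₁ 0 + max C₂ 0) * ((1 + ‖z‖) ^ n)⁻¹ *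
          Real.exp (max r₁ r₂ * |z.im|) := by ring

lemma memZ_const_mul (c : ℂ) (h : MemZClass f) : MemZClass (fun z => c * f z) := by
  obtain ⟨hd, r, hr, hC⟩ := h
  refine ⟨hd.const_mul c, r, hr, fun n => ?_⟩
  obtain ⟨C, h1⟩ := hC n
  refine ⟨‖c‖ * C, fun z => ?_⟩
  calc ‖c * f z‖ = ‖c‖ * ‖f z‖ := norm_mul _ _
    _ ≤ ‖c‖ * (C * ((1 + ‖z‖) ^ n)⁻¹ * Real.exp (r * |z.im|)) :=
        mul_le_mul_of_nonneg_left (h1 z) (norm_nonneg _)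
    _ = ‖c‖ * C * ((1 + ‖z‖) ^ n)⁻¹ * Real.exp (r * |z.im|) := by ring

lemma memZ_linear_mul (a : ℂ) (h : MemZClass f) : MemZClass (fun z => (z - a) * f z) := by
  obtain ⟨hd, r, hr, hC⟩ := h
  refine ⟨(differentiable_id.sub_const a).mul hd, r, hr, fun n => ?_⟩
  obtain ⟨C, h1⟩ := hC (n + 1)
  refine ⟨(1 + ‖a‖) * max C 0, fun z => ?_⟩
  have hb := memZ_C_nonneg h1 z
  have hza : ‖z - a‖ ≤ (1 + ‖a‖) * (1 + ‖z‖) := by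
    have h2 : ‖z - a‖ ≤ ‖z‖ + ‖a‖ := by
      simpa [sub_eq_add_neg] using norm_add_le z (-a)
    nlinarith [norm_nonneg z, norm_nonneg a]
  have hne : (1 + ‖z‖) ≠ 0 := by positivity
  calc ‖(z - a) * f z‖ = ‖z - a‖ * ‖f z‖ := norm_mul _ _
    _ ≤ ((1 + ‖a‖) * (1 + ‖z‖)) *
        (max C 0 * ((1 + ‖z‖) ^ (n + 1))⁻¹ * Real.exp (r * |z.im|)) :=
        mul_le_mul hza hb (norm_nonneg _) (by positivity)
    _ = (1 + ‖a‖) * max C 0 * ((1 + ‖z‖) ^ n)⁻¹ * Real.exp (r * |z.im|) := by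
        rw [pow_succ]
        field_simp

lemma memZ_shift (b : ℂ) (h : MemZClass f) : MemZClass (fun z => f (z - b)) := by
  obtain ⟨hd, r, hr, hC⟩ := h
  refine ⟨hd.comp (differentiable_id.sub_const b), r, hr, fun n => ?_⟩
  obtain ⟨C, h1⟩ := hC n
  refine ⟨max C 0 * (1 + ‖b‖) ^ n * Real.exp (r * |b.im|), fun z => ?_⟩
  have hb := memZ_C_nonneg h1 (z - b)
  have hpos : (0:ℝ) < 1 + ‖z - b‖ := by positivity
  have hinv : ((1 + ‖z - b‖) ^ n)⁻¹ ≤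
      (1 + ‖b‖) ^ n * ((1 + ‖z‖) ^ n)⁻¹ := by
    have hkey : (1 + ‖z‖) ^ n ≤ ((1 + ‖b‖) * (1 + ‖z - b‖)) ^ n := by
      apply pow_le_pow_left₀ (by positivity)
      have h2 : ‖z‖ ≤ ‖z - b‖ + ‖b‖ := by
        simpa using norm_add_le (z - b) b
      nlinarith [norm_nonneg (z - b), norm_nonneg b]
    calc ((1 + ‖z - b‖) ^ n)⁻¹
        = (1 + ‖b‖) ^ n * (((1 + ‖b‖) * (1 + ‖z - b‖)) ^ n)⁻¹ := by
          rw [mul_pow, mul_inv, ← mul_assoc,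
            mul_inv_cancel₀ (pow_ne_zero _ (by positivity : (0:ℝ) < 1 + ‖b‖).ne'),
            one_mul]
      _ ≤ (1 + ‖b‖) ^ n * ((1 + ‖z‖) ^ n)⁻¹ := by
          apply mul_le_mul_of_nonneg_left _ (by positivity)
          exact inv_anti₀ (by positivity) hkey
  have hexp : Real.exp (r * |(z - b).im|) ≤ Real.exp (r * |b.im|) * Real.exp (r * |z.im|) := by
    rw [← Real.exp_add]
    apply Real.exp_le_exp.2
    have h2 : |(z - b).im| ≤ |b.im| + |z.im| := by
      rw [Complex.sub_im]
      calc |z.im - b.im| ≤ |z.im| + |b.im| := abs_sub _ _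
        _ = |b.im| + |z.im| := by ring
    calc r * |(z - b).im| ≤ r * (|b.im| + |z.im|) :=
          mul_le_mul_of_nonneg_left h2 hr.le
      _ = r * |b.im| + r * |z.im| := by ring
  calc ‖f (z - b)‖
      ≤ max C 0 * ((1 + ‖z - b‖) ^ n)⁻¹ * Real.exp (r * |(z - b).im|) := hb
    _ ≤ max C 0 * ((1 + ‖b‖) ^ n * ((1 + ‖z‖) ^ n)⁻¹) *
        (Real.exp (r * |b.im|) * Real.exp (r * |z.im|)) := by
        apply mul_le_mul _ hexp (Real.exp_nonneg _) (by positivity)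
        exact mul_le_mul_of_nonneg_left hinv (le_max_right _ _)
    _ = max C 0 * (1 + ‖b‖) ^ n * Real.exp (r * |b.im|) *
        ((1 + ‖z‖) ^ n)⁻¹ * Real.exp (r * |z.im|) := by ring

lemma memZ_pow_mul (a : ℂ) (p : ℕ) (h : MemZClass f) :
    MemZClass (fun z => (z - a) ^ p * f z) := by
  induction p with
  | zero => simpa using h
  | succ p ih =>
    have : (fun z => (z - a) ^ (p + 1) * f z)
        = fun z => (z - a) * ((z - a) ^ p * f z) := by
      funext z; ring
    rw [this]
    exact memZ_linear_mul a ih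

lemma memZ_prod_mul {ι : Type*} (s : Finset ι) (a : ι → ℂ) (p : ℕ) (h : MemZClass f) :
    MemZClass (fun z => (∏ i ∈ s, (z - a i) ^ p) * f z) := by
  classical
  induction s using Finset.induction_on with
  | empty => simpa using h
  | insert i s hx ih =>
    have : (fun z => (∏ j ∈ insert i s, (z - a j) ^ p) * f z)
        = fun z => (z - a i) ^ p * ((∏ j ∈ s, (z - a j) ^ p) * f z) := by
      funext z
      rw [Finset.prod_insert hx]
      ring
    rw [this]
    exact memZ_pow_mul (a i) p ih

lemma memZ_sum {ι : Type*} (s : Finset ι) (F : ι → ℂ → ℂ) (h : ∀ i ∈ s, MemZClass (F i)) :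
    MemZClass (fun z => ∑ i ∈ s, F i z) := by
  classical
  induction s using Finset.induction_on with
  | empty => simpa using memZ_zero
  | insert i s hx ih =>
    have : (fun z => ∑ j ∈ insert i s, F j z)
        = fun z => F i z + ∑ j ∈ s, F j z := by
      funext z
      rw [Finset.sum_insert hx]
    rw [this]
    exact memZ_add (h i (Finset.mem_insert_self i s))
      (ih fun j hj => h j (Finset.mem_insert_of_mem hj))

end closure

/-! ### Part 3: iterated derivative computations -/

section derivs

lemma cdn {f : ℂ → ℂ} (hf : ContDiff ℂ (⊤ : ℕ∞) f) (n : ℕ) : ContDiff ℂ n f :=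
  hf.of_le (by exact_mod_cast le_top)

lemma iteratedDeriv_zero_fun (n : ℕ) (x : ℂ) :
    iteratedDeriv n (fun _ : ℂ => (0 : ℂ)) x = 0 := by
  induction n generalizing x with
  | zero => simp
  | succ n ih => rw [iteratedDeriv_succ']; simpa using ih x

lemma iteratedDeriv_add' {f g : ℂ → ℂ} (hf : ContDiff ℂ (⊤ : ℕ∞) f)
    (hg : ContDiff ℂ (⊤ : ℕ∞) g) (n : ℕ) (x : ℂ) :
    iteratedDeriv n (fun z => f z + g z) x = iteratedDeriv n f x + iteratedDeriv n g x := by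
  simp only [← iteratedDerivWithin_univ]
  exact iteratedDerivWithin_add (Set.mem_univ x) uniqueDiffOn_univ
    (cdn hf n).contDiffWithinAt (cdn hg n).contDiffWithinAt

lemma iteratedDeriv_const_mul' {f : ℂ → ℂ} (hf : ContDiff ℂ (⊤ : ℕ∞) f) (c : ℂ) (n : ℕ) (x : ℂ) :
    iteratedDeriv n (fun z => c * f z) x = c * iteratedDeriv n f x := by
  simp only [← iteratedDerivWithin_univ]
  exact iteratedDerivWithin_const_mul (Set.mem_univ x) uniqueDiffOn_univ c (cdn hf n).contDiffWithinAt

lemma iteratedDeriv_sum' {ι : Type*} (s : Finset ι) (F : ι → ℂ → ℂ)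
    (h : ∀ i ∈ s, ContDiff ℂ (⊤ : ℕ∞) (F i)) (n : ℕ) (x : ℂ) :
    iteratedDeriv n (fun z => ∑ i ∈ s, F i z) x = ∑ i ∈ s, iteratedDeriv n (F i) x := by
  classical
  induction s using Finset.induction_on with
  | empty => simpa using iteratedDeriv_zero_fun n x
  | insert i s hx ih =>
    have heq : (fun z => ∑ j ∈ insert i s, F j z) = fun z => F i z + ∑ j ∈ s, F j z := by
      funext z; rw [Finset.sum_insert hx]
    rw [heq, Finset.sum_insert hx,
      iteratedDeriv_add' (h i (Finset.mem_insert_self i s))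
        (ContDiff.sum fun j hj => h j (Finset.mem_insert_of_mem hj)) n x,
      ih fun j hj => h j (Finset.mem_insert_of_mem hj)]

/-- The key computation: derivatives of `(z-c)^p * h z` at `c`, for orders `≤ p`. -/
lemma iteratedDeriv_pow_mul (c : ℂ) :
    ∀ (p : ℕ) (h : ℂ → ℂ), ContDiff ℂ (⊤ : ℕ∞) h → ∀ l ≤ p,
      iteratedDeriv l (fun z => (z - c) ^ p * h z) c
        = if l = p then (p.factorial : ℂ) * h c else 0 := by
  intro p
  induction p with
  | zero =>
    intro h hh l hl
    interval_cases l
    simp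
  | succ p ih =>
    intro h hh l hl
    match l with
    | 0 =>
      simp [iteratedDeriv_zero]
    | Nat.succ l' =>
      have hl' : l' ≤ p := Nat.succ_le_succ_iff.mp hl
      rw [iteratedDeriv_succ']
      have hd : Differentiable ℂ h := hh.differentiable (by simp)
      have hderiv : deriv (fun z => (z - c) ^ (p + 1) * h z)
          = fun z => (z - c) ^ p * (((p : ℂ) + 1) * h z + (z - c) * deriv h z) := by
        funext z
        have h1 : HasDerivAt (fun z : ℂ => (z - c) ^ (p + 1))
            ((((p : ℕ) + 1 : ℕ) : ℂ) * (z - c) ^ p * 1) z :=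
          ((hasDerivAt_id z).sub_const c).pow (p + 1)
        have h2 : HasDerivAt h (deriv h z) z := (hd z).hasDerivAt
        rw [show (fun z => (z - c) ^ (p + 1) * h z) = (fun z => (z - c) ^ (p + 1)) * h from rfl,
          (h1.mul h2).deriv]
        push_cast
        ring
      rw [hderiv]
      have hsm : ContDiff ℂ (⊤ : ℕ∞) (fun z => ((p : ℂ) + 1) * h z + (z - c) * deriv h z) := by
        apply ContDiff.add
        · exact contDiff_const.mul hh
        · exact (contDiff_id.sub contDiff_const).mul (contDiff_infty_iff_deriv.mp hh).2
      rw [ih _ hsm l' hl']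
      by_cases hc : l' = p
      · subst hc
        simp only [if_pos rfl, if_pos rfl, sub_self, zero_mul, add_zero, Nat.factorial_succ]
        push_cast
        ring
      · rw [if_neg hc, if_neg (fun hcc => hc (Nat.succ_injective hcc))]

end derivs

/-! ### Part 4: the bump function -/

lemma exists_bump : ∃ g : ℝ → ℝ, ContDiff ℝ (⊤ : ℕ∞) g ∧
    (∀ t : ℝ, (1:ℝ)/2 ≤ |t| → g t = 0) ∧ ∫ t : ℝ, g t = 1 := by
  let f : ContDiffBump (0:ℝ) := ⟨1/4, 1/2, by norm_num, by norm_num⟩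
  refine ⟨f.normed volume, f.contDiff_normed, fun t ht => ?_, f.integral_normed⟩
  have hns : t ∉ Function.support (f.normed volume) := by
    rw [f.support_normed_eq]
    intro hmem
    have : |t| < 1/2 := by
      have := mem_ball.mp hmem
      rwa [Real.dist_0_eq_abs] at this
    linarith
  exact Function.notMem_support.mp hns

end ZClassProof

/-! ### The main theorem -/

/-- **Hermite interpolation in the class `𝒵`.**  Given pairwise distinct points
`β 1, …, β M ∈ ℂ` and orders `K 1, …, K M ∈ ℕ`, there are functions `ψ (m, k) ∈ 𝒵`
(`k = 0, …, K m`) with `ψ (m, k)^{(l)} (β n) = δ_{m,n} δ_{k,l}` for all `n` and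
`l = 0, …, K m`. -/
theorem zclass_interpolation (M : ℕ) (β : Fin M → ℂ) (hβ : Function.Injective β)
    (K : Fin M → ℕ) :
    ∃ ψ : Fin M → ℕ → ℂ → ℂ,
      ∀ m : Fin M, ∀ k ≤ K m,
        MemZClass (ψ m k) ∧
        ∀ n : Fin M, ∀ l ≤ K m,
          iteratedDeriv l (ψ m k) (β n) = if m = n ∧ k = l then 1 else 0 := by
  classical
  obtain ⟨g, hg, hsupp, hgint⟩ := ZClassProof.exists_bump
  set φ : ℂ → ℂ := ZClassProof.PW g with hφdef
  have hφZ : MemZClass φ := ZClassProof.PW_memZ hg hsupp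
  have hφsm : ContDiff ℂ (⊤ : ℕ∞) φ := hφZ.1.contDiff
  have hφ0 : φ 0 = 1 := ZClassProof.PW_zero hg hsupp hgint
  set Efun : (m : Fin M) → ℕ → ℂ → ℂ := fun m j z =>
    (z - β m) ^ j *
      ((∏ i ∈ Finset.univ.erase m, (z - β i) ^ (K m + 1)) * φ (z - β m)) with hE
  set Dmat : (m : Fin M) → Matrix (Fin (K m + 1)) (Fin (K m + 1)) ℂ := fun m l j =>
    iteratedDeriv l (Efun m j) (β m) with hD
  set cvec : (m : Fin M) → ℕ → Fin (K m + 1) → ℂ := fun m k =>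
    (Dmat m)⁻¹ *ᵥ Pi.single ⟨min k (K m), Nat.lt_succ_of_le (min_le_right _ _)⟩ 1 with hcv
  refine ⟨fun m k z => ∑ j : Fin (K m + 1), cvec m k j * Efun m (j : ℕ) z, ?_⟩
  intro m k hk
  -- smoothness of the pieces
  have hRest : ContDiff ℂ (⊤ : ℕ∞) (fun z =>
      (∏ i ∈ Finset.univ.erase m, (z - β i) ^ (K m + 1)) * φ (z - β m)) := by
    apply ContDiff.mul
    · exact contDiff_prod fun i _ => (contDiff_id.sub contDiff_const).pow _
    · exact hφsm.comp (contDiff_id.sub contDiff_const)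
  have hEsm : ∀ j : ℕ, ContDiff ℂ (⊤ : ℕ∞) (Efun m j) := fun j =>
    ((contDiff_id.sub contDiff_const).pow j).mul hRest
  constructor
  · -- membership in the class 𝒵
    apply ZClassProof.memZ_sum
    intro j _
    apply ZClassProof.memZ_const_mul
    apply ZClassProof.memZ_pow_mul
    apply ZClassProof.memZ_prod_mul
    exact ZClassProof.memZ_shift (β m) hφZ
  · -- the interpolation conditions
    intro n l hl
    have hsum : iteratedDeriv l (fun z => ∑ j : Fin (K m + 1), cvec m k j * Efun m (j : ℕ) z)
        (β n) = ∑ j : Fin (K m + 1), cvec m k j * iteratedDeriv l (Efun m (j : ℕ)) (β n) := by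
      rw [ZClassProof.iteratedDeriv_sum' Finset.univ
        (fun j : Fin (K m + 1) => fun z => cvec m k j * Efun m (j : ℕ) z)
        (fun j _ => contDiff_const.mul (hEsm (j : ℕ))) l (β n)]
      exact Finset.sum_congr rfl fun j _ =>
        ZClassProof.iteratedDeriv_const_mul' (hEsm (j : ℕ)) _ l (β n)
    rw [hsum]
    by_cases hmn : m = n
    · -- at the point β m itself
      subst hmn
      have hl2 : l < K m + 1 := by omega
      have hBb : ((∏ i ∈ Finset.univ.erase m, (β m - β i) ^ (K m + 1)) * φ (β m - β m)) ≠ 0 := by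
        rw [sub_self, hφ0, mul_one]
        apply Finset.prod_ne_zero_iff.mpr
        intro i hi
        exact pow_ne_zero _ (sub_ne_zero.mpr fun hbe =>
          (Finset.mem_erase.mp hi).1 (hβ hbe).symm)
      have htri : (Dmat m).BlockTriangular OrderDual.toDual := by
        intro i j hij
        have hij' : (i : ℕ) < (j : ℕ) := hij
        have h0 := ZClassProof.iteratedDeriv_pow_mul (β m) (j : ℕ)
          (fun z => (∏ i ∈ Finset.univ.erase m, (z - β i) ^ (K m + 1)) * φ (z - β m))
          hRest (i : ℕ) hij'.le
        rw [if_neg hij'.ne] at h0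
        show iteratedDeriv (i : ℕ) (Efun m (j : ℕ)) (β m) = 0
        simpa [hE] using h0
      have hdiag : ∀ j : Fin (K m + 1), Dmat m j j = ((j : ℕ).factorial : ℂ) *
          ((∏ i ∈ Finset.univ.erase m, (β m - β i) ^ (K m + 1)) * φ (β m - β m)) := by
        intro j
        have h0 := ZClassProof.iteratedDeriv_pow_mul (β m) (j : ℕ)
          (fun z => (∏ i ∈ Finset.univ.erase m, (z - β i) ^ (K m + 1)) * φ (z - β m))
          hRest (j : ℕ) le_rfl
        rw [if_pos rfl] at h0
        show iteratedDeriv (j : ℕ) (Efun m (j : ℕ)) (β m) = _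
        simpa [hE] using h0
      have hdet : (Dmat m).det ≠ 0 := by
        rw [Matrix.det_of_lowerTriangular _ htri]
        apply Finset.prod_ne_zero_iff.mpr
        intro j _
        rw [hdiag j]
        exact mul_ne_zero (Nat.cast_ne_zero.mpr (Nat.factorial_ne_zero _)) hBb
      have hDc : Dmat m *ᵥ cvec m k =
          Pi.single ⟨min k (K m), Nat.lt_succ_of_le (min_le_right _ _)⟩ 1 := by
        rw [hcv]
        rw [Matrix.mulVec_mulVec, Matrix.mul_nonsing_inv _ (isUnit_iff_ne_zero.mpr hdet),
          Matrix.one_mulVec]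
      have hrow : ∑ j : Fin (K m + 1), cvec m k j * iteratedDeriv l (Efun m (j : ℕ)) (β m)
          = (Dmat m *ᵥ cvec m k) ⟨l, hl2⟩ := by
        have h1 : (Dmat m *ᵥ cvec m k) ⟨l, hl2⟩
            = ∑ j : Fin (K m + 1), Dmat m ⟨l, hl2⟩ j * cvec m k j := rfl
        rw [h1]
        exact Finset.sum_congr rfl fun j _ => by rw [mul_comm]
      rw [hrow, hDc, Pi.single_apply]
      have hmin : min k (K m) = k := min_eq_left hk
      by_cases hkl : k = l
      · subst hkl
        rw [if_pos (by simp [Fin.ext_iff, hmin]), if_pos ⟨rfl, rfl⟩]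
      · rw [if_neg (by simp [Fin.ext_iff, hmin]; omega), if_neg (by tauto)]
    · -- at a different point β n
      have hne : n ≠ m := fun h => hmn h.symm
      have hnmem : n ∈ Finset.univ.erase m := Finset.mem_erase.mpr ⟨hne, Finset.mem_univ n⟩
      rw [if_neg (by tauto)]
      apply Finset.sum_eq_zero
      intro j _
      have hEeq : Efun m (j : ℕ) = fun z => (z - β n) ^ (K m + 1) *
          ((z - β m) ^ (j : ℕ) *
            ((∏ i ∈ (Finset.univ.erase m).erase n, (z - β i) ^ (K m + 1)) * φ (z - β m))) := by
        funext z
        show (z - β m) ^ (j : ℕ) *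
            ((∏ i ∈ Finset.univ.erase m, (z - β i) ^ (K m + 1)) * φ (z - β m)) = _
        rw [← Finset.mul_prod_erase _ _ hnmem]
        ring
      have hsm2 : ContDiff ℂ (⊤ : ℕ∞) (fun z => (z - β m) ^ (j : ℕ) *
          ((∏ i ∈ (Finset.univ.erase m).erase n, (z - β i) ^ (K m + 1)) * φ (z - β m))) := by
        apply ContDiff.mul
        · exact (contDiff_id.sub contDiff_const).pow _
        · apply ContDiff.mul
          · exact contDiff_prod fun i _ => (contDiff_id.sub contDiff_const).pow _
          · exact hφsm.comp (contDiff_id.sub contDiff_const)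
      have h0 := ZClassProof.iteratedDeriv_pow_mul (β n) (K m + 1)
        (fun z => (z - β m) ^ (j : ℕ) *
          ((∏ i ∈ (Finset.univ.erase m).erase n, (z - β i) ^ (K m + 1)) * φ (z - β m)))
        hsm2 l (by omega)
      rw [if_neg (by omega)] at h0
      rw [hEeq]
      simp only [h0, mul_zero]
end
end

section
/- Let v : (0,∞) → (0,∞) satisfy √(v(a)·v(b)) / (v(a) + v(b)) = √(a·b) / (a + b) for all a, b > 0. Then either v(α) = v(1)·α for all α > 0, or v(α) = v(1)·α^{−1} for all α > 0. -/
/-- If `v : (0,∞) → (0,∞)` satisfies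
`√(v a · v b) / (v a + v b) = √(a·b) / (a + b)` for all `a b > 0`,
then either `v α = v 1 · α` for all `α > 0`, or `v α = v 1 · α⁻¹` for all `α > 0`. -/
theorem functional_equation_dilation (v : ℝ → ℝ) (hv : ∀ a, 0 < a → 0 < v a)
    (heq : ∀ a b : ℝ, 0 < a → 0 < b →
      Real.sqrt (v a * v b) / (v a + v b) = Real.sqrt (a * b) / (a + b)) :
    (∀ α : ℝ, 0 < α → v α = v 1 * α) ∨ (∀ α : ℝ, 0 < α → v α = v 1 * α⁻¹) := by
  have hc : 0 < v 1 := hv 1 one_pos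
  -- key polynomial identity from the functional equation
  have h2 : ∀ a b : ℝ, 0 < a → 0 < b →
      v a * v b * (a + b) ^ 2 = a * b * (v a + v b) ^ 2 := by
    intro a b ha hb
    have hva := hv a ha
    have hvb := hv b hb
    have h := heq a b ha hb
    rw [div_eq_div_iff (by positivity) (by positivity)] at h
    have hsq : (Real.sqrt (v a * v b) * (a + b)) * (Real.sqrt (v a * v b) * (a + b))
        = (Real.sqrt (a * b) * (v a + v b)) * (Real.sqrt (a * b) * (v a + v b)) := by
      rw [h]
    have e1 : Real.sqrt (v a * v b) * Real.sqrt (v a * v b) = v a * v b :=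
      Real.mul_self_sqrt (by positivity)
    have e2 : Real.sqrt (a * b) * Real.sqrt (a * b) = a * b :=
      Real.mul_self_sqrt (by positivity)
    nlinarith [hsq, e1, e2]
  -- each point is on one of the two branches
  have key : ∀ a : ℝ, 0 < a → v a = v 1 * a ∨ v a = v 1 * a⁻¹ := by
    intro a ha
    have h := h2 a 1 ha one_pos
    have hfac : (v a - v 1 * a) * (a * v a - v 1) = 0 := by nlinarith [h]
    rcases mul_eq_zero.mp hfac with h' | h'
    · left; linarith [sub_eq_zero.mp h']
    · right
      have : a * v a = v 1 := sub_eq_zero.mp h'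
      field_simp
      linarith [this]
  by_contra hcon
  push_neg at hcon
  obtain ⟨⟨a, ha, hva⟩, ⟨b, hb, hvb⟩⟩ := hcon
  have hva' : v a = v 1 * a⁻¹ := (key a ha).resolve_left hva
  have hvb' : v b = v 1 * b := (key b hb).resolve_right hvb
  have hane : a ≠ 1 := by
    intro h; apply hva; rw [h] at hva' ⊢; simpa using hva'
  have hbne : b ≠ 1 := by
    intro h; apply hvb; rw [h] at hvb' ⊢; simpa using hvb'
  have E := h2 a b ha hb
  rw [hva', hvb'] at E
  have ha' : a ≠ 0 := ne_of_gt ha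
  field_simp at E
  -- from E deduce (a+b)^2 = (1+a*b)^2, then a+b = 1+a*b, then (a-1)(b-1)=0
  have E' : (a + b) ^ 2 = (1 + a * b) ^ 2 :=
    mul_left_cancel₀ (show (v 1 ^ 2 * b * a ^ 2 : ℝ) ≠ 0 by positivity)
      (by linear_combination (v 1 ^ 2 * b * a ^ 2) * E)
  have h4 : (a + b - (1 + a * b)) * ((a + b) + (1 + a * b)) = 0 := by
    linear_combination E'
  have h5 : a + b - (1 + a * b) = 0 := by
    rcases mul_eq_zero.mp h4 with h' | h'
    · exact h'
    · nlinarith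
  have h6 : (a - 1) * (b - 1) = 0 := by linear_combination -h5
  rcases mul_eq_zero.mp h6 with h' | h'
  · exact hane (by linarith [sub_eq_zero.mp h'])
  · exact hbne (by linarith [sub_eq_zero.mp h'])
end

section
/- The linear span of the family of functions {t ↦ e^{−αt} : α > 0} is dense in L²(0,∞). -/
open MeasureTheory

local notation "μ₀" => MeasureTheory.volume.restrict (Set.Ioi (0 : ℝ))

/-- The exponential `t ↦ e^{-αt}` is in `L²(0,∞)` for `α > 0`. -/
lemma memLp_exp_aux (α : ℝ) (hα : 0 < α) :
    MemLp (fun t : ℝ => Complex.exp (-(α : ℂ) * t)) 2 μ₀ := by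
  have hcont : Continuous fun t : ℝ => Complex.exp (-(α : ℂ) * t) := by
    exact Complex.continuous_exp.comp (by continuity)
  rw [memLp_two_iff_integrable_sq_norm hcont.aestronglyMeasurable]
  have heq : ∀ t : ℝ, ‖Complex.exp (-(α : ℂ) * t)‖ ^ 2 = Real.exp (-(2 * α) * t) := by
    intro t
    rw [Complex.norm_exp]
    have h1 : (-(α : ℂ) * t).re = -α * t := by simp
    rw [h1, ← Real.exp_nat_mul]
    congr 1
    push_cast
    ring
  simp_rw [heq]
  exact exp_neg_integrableOn_Ioi 0 (by positivity)

set_option maxHeartbeats 1000000 in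
/-- Core analytic lemma: if the Laplace transform of an `F` (with `e^{-t} F` integrable)
vanishes for all positive parameters, then `F = 0` a.e. on `(0,∞)`. -/
lemma laplace_vanishing_aux {F : ℝ → ℂ}
    (hF : Integrable (fun t : ℝ => Complex.exp (-(1 : ℂ) * t) * F t) μ₀)
    (h : ∀ α : ℝ, 0 < α → ∫ t, Complex.exp (-(α : ℂ) * t) * F t ∂μ₀ = 0) :
    ∀ᵐ t ∂μ₀, F t = 0 := by
  set g : ℝ → ℂ := fun t : ℝ => Complex.exp (-(1 : ℂ) * t) * F t with hgdef
  have hmem_Ioi : ∀ᵐ t ∂μ₀, t ∈ Set.Ioi (0 : ℝ) := ae_restrict_mem measurableSet_Ioi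
  -- integrability of e^{-nt} g
  have hint_n : ∀ n : ℕ, Integrable (fun t : ℝ => Complex.exp (-(n : ℂ) * t) * g t) μ₀ := by
    intro n
    refine hF.bdd_mul (c := 1) (f := fun t : ℝ => Complex.exp (-(n : ℂ) * t))
      ((Complex.continuous_exp.comp (by continuity)).aestronglyMeasurable) ?_
    filter_upwards [hmem_Ioi] with t ht
    have : ‖Complex.exp (-(n : ℂ) * t)‖ = Real.exp (-(n : ℝ) * t) := by
      rw [Complex.norm_exp]
      congr 1
      simp
    rw [this, Real.exp_le_one_iff]
    have ht' : (0 : ℝ) < t := ht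
    have hnn : (0 : ℝ) ≤ (n : ℝ) * t := mul_nonneg (Nat.cast_nonneg n) ht'.le
    linarith
  -- moments vanish
  have hgn : ∀ n : ℕ, ∫ t, Complex.exp (-(n : ℂ) * t) * g t ∂μ₀ = 0 := by
    intro n
    have hcongr : ∀ t : ℝ, Complex.exp (-(n : ℂ) * t) * g t
        = Complex.exp (-(((n : ℝ) + 1 : ℝ) : ℂ) * t) * F t := by
      intro t
      rw [hgdef]
      rw [← mul_assoc, ← Complex.exp_add]
      congr 2
      push_cast
      ring
    simp_rw [hcongr]
    exact h ((n : ℝ) + 1) (by positivity)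
  -- integrals against polynomials of e^{-t} vanish
  have hpoly : ∀ q : Polynomial ℝ,
      ∫ t, ((q.eval (Real.exp (-t)) : ℝ) : ℂ) * g t ∂μ₀ = 0 := by
    intro q
    have expand : ∀ t : ℝ, ((q.eval (Real.exp (-t)) : ℝ) : ℂ) * g t
        = ∑ i ∈ Finset.range (q.natDegree + 1),
            (q.coeff i : ℂ) * (Complex.exp (-(i : ℂ) * t) * g t) := by
      intro t
      rw [Polynomial.eval_eq_sum_range]
      push_cast
      rw [Finset.sum_mul]
      refine Finset.sum_congr rfl fun i _ => ?_
      have h2 : Complex.exp (-(t : ℂ)) ^ i = Complex.exp (-(i : ℂ) * t) := by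
        rw [← Complex.exp_nat_mul]
        congr 1
        ring
      rw [h2, mul_assoc]
    simp_rw [expand]
    rw [integral_finset_sum _ fun i _ => (hint_n i).const_mul _]
    refine Finset.sum_eq_zero fun i _ => ?_
    rw [integral_const_mul, hgn i, mul_zero]
  have hnormint : Integrable (fun t => ‖g t‖) μ₀ := hF.norm
  -- exp(-t) lands in [0,1] for t > 0
  have hmemIcc : ∀ t : ℝ, t ∈ Set.Ioi (0 : ℝ) → Real.exp (-t) ∈ Set.Icc (0 : ℝ) 1 := by
    intro t ht
    exact ⟨(Real.exp_pos _).le, Real.exp_le_one_iff.mpr (by simpa using le_of_lt ht)⟩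
  -- integrals against continuous functions of e^{-t} vanish
  have hcont : ∀ b : ℝ → ℝ, Continuous b →
      ∫ t, ((b (Real.exp (-t)) : ℝ) : ℂ) * g t ∂μ₀ = 0 := by
    intro b hb
    -- integrability of such products
    have hint_c : ∀ c : ℝ → ℝ, Continuous c →
        Integrable (fun t => ((c (Real.exp (-t)) : ℝ) : ℂ) * g t) μ₀ := by
      intro c hc
      obtain ⟨C, hC⟩ := isCompact_Icc.exists_bound_of_continuousOn
        (s := Set.Icc (0:ℝ) 1) hc.continuousOn
      refine hF.bdd_mul (c := C) ?_ ?_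
      · exact (Complex.continuous_ofReal.comp
          (hc.comp (Real.continuous_exp.comp continuous_neg))).aestronglyMeasurable
      · filter_upwards [hmem_Ioi] with t ht
        simpa using hC _ (hmemIcc t ht)
    set B : C(Set.Icc (0:ℝ) 1, ℝ) := (ContinuousMap.mk b hb).restrict (Set.Icc 0 1) with hBdef
    have hBmem : B ∈ closure ((polynomialFunctions (Set.Icc (0:ℝ) 1)) :
        Set C(Set.Icc (0:ℝ) 1, ℝ)) := by
      have htop := polynomialFunctions_closure_eq_top 0 1
      have : B ∈ (polynomialFunctions (Set.Icc (0:ℝ) 1)).topologicalClosure := by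
        rw [htop]; trivial
      rwa [← SetLike.mem_coe, Subalgebra.topologicalClosure_coe] at this
    set I := ∫ t, ((b (Real.exp (-t)) : ℝ) : ℂ) * g t ∂μ₀ with hIdef
    set M := ∫ t, ‖g t‖ ∂μ₀ with hMdef
    have hM0 : 0 ≤ M := integral_nonneg fun t => norm_nonneg _
    have key : ∀ ε : ℝ, 0 < ε → ‖I‖ ≤ ε * (M + 1) := by
      intro ε hε
      obtain ⟨p', hp'mem, hp'⟩ := Metric.mem_closure_iff.mp hBmem ε hε
      rw [SetLike.mem_coe, ← SetLike.mem_coe, polynomialFunctions_coe] at hp'mem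
      obtain ⟨q, rfl⟩ := hp'mem
      have hbound : ∀ᵐ t ∂μ₀,
          ‖(((b (Real.exp (-t)) : ℝ) : ℂ) - ((q.eval (Real.exp (-t)) : ℝ) : ℂ)) * g t‖
            ≤ ε * ‖g t‖ := by
        filter_upwards [hmem_Ioi] with t ht
        have hx : Real.exp (-t) ∈ Set.Icc (0:ℝ) 1 := hmemIcc t ht
        have hdist : dist (B ⟨Real.exp (-t), hx⟩)
            ((Polynomial.toContinuousMapOnAlgHom (Set.Icc (0:ℝ) 1) q) ⟨Real.exp (-t), hx⟩)
              ≤ dist B (Polynomial.toContinuousMapOnAlgHom (Set.Icc (0:ℝ) 1) q) :=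
          ContinuousMap.dist_apply_le_dist _
        have hdist' : |b (Real.exp (-t)) - q.eval (Real.exp (-t))| ≤ ε := by
          have : dist (b (Real.exp (-t))) (q.eval (Real.exp (-t))) ≤ ε :=
            le_trans hdist (le_of_lt hp')
          simpa [Real.dist_eq, hBdef] using this
        rw [norm_mul]
        refine mul_le_mul_of_nonneg_right ?_ (norm_nonneg _)
        rw [← Complex.ofReal_sub, Complex.norm_real]
        exact hdist'
      have hcq : Continuous (fun x : ℝ => q.eval x) := q.continuous
      have hqint := hint_c _ hcq
      have hbint := hint_c b hb
      have hIeq : I = ∫ t, (((b (Real.exp (-t)) : ℝ) : ℂ)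
          - ((q.eval (Real.exp (-t)) : ℝ) : ℂ)) * g t ∂μ₀ := by
        simp_rw [sub_mul]
        rw [integral_sub hbint hqint, hpoly q, sub_zero]
      calc ‖I‖ ≤ ∫ t, ‖(((b (Real.exp (-t)) : ℝ) : ℂ)
            - ((q.eval (Real.exp (-t)) : ℝ) : ℂ)) * g t‖ ∂μ₀ := by
              rw [hIeq]; exact norm_integral_le_integral_norm _
        _ ≤ ∫ t, ε * ‖g t‖ ∂μ₀ := by
              refine integral_mono_ae ?_ (hnormint.const_mul ε) hbound
              refine ((hbint.sub hqint).norm.congr ?_)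
              filter_upwards with t
              simp [Pi.sub_apply, sub_mul]
        _ = ε * M := integral_const_mul ε _
        _ ≤ ε * (M + 1) := by nlinarith
    have hnorm0 : ‖I‖ ≤ 0 := by
      refine le_of_forall_pos_le_add ?_
      intro ε hε
      have := key (ε / (M + 1)) (by positivity)
      rw [div_mul_cancel₀] at this
      · linarith
      · positivity
    have : ‖I‖ = 0 := le_antisymm hnorm0 (norm_nonneg _)
    rwa [norm_eq_zero] at this
  -- conclude g = 0 a.e. using density of smooth compactly supported functions
  have hg0 : ∀ᵐ t ∂μ₀, g t = 0 := by
    apply ae_eq_zero_of_integral_contDiff_smul_eq_zero hF.locallyIntegrable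
    intro φ hφ hφsupp
    obtain ⟨R, hRpos, hR⟩ := hφsupp.exists_pos_le_norm
    set b : ℝ → ℝ := fun x => if 0 < x then φ (-Real.log x) else 0 with hbdef
    have hbcont : Continuous b := by
      rw [continuous_iff_continuousAt]
      intro x₀
      rcases lt_or_ge 0 x₀ with h₀ | h₀
      · have hev : ∀ᶠ x in nhds x₀, b x = φ (-Real.log x) := by
          filter_upwards [lt_mem_nhds h₀] with x hx
          simp [hbdef, hx]
        have hca : ContinuousAt (fun x => φ (-Real.log x)) x₀ :=
          hφ.continuous.continuousAt.comp ((Real.continuousAt_log h₀.ne').neg)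
        exact hca.congr (Filter.EventuallyEq.symm hev)
      · have hev : ∀ᶠ x in nhds x₀, b x = 0 := by
          filter_upwards [Iio_mem_nhds (lt_of_le_of_lt h₀ (Real.exp_pos (-R)))] with x hx
          by_cases hx0 : 0 < x
          · have hlog : Real.log x < -R := (Real.log_lt_iff_lt_exp hx0).mpr hx
            have habs : R ≤ ‖-Real.log x‖ := by
              rw [Real.norm_eq_abs]
              have : R ≤ -Real.log x := by linarith
              exact le_trans this (le_abs_self _)
            simp [hbdef, hx0, hR _ habs]
          · simp [hbdef, hx0]
        exact continuousAt_const.congr (Filter.EventuallyEq.symm hev)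
    have hae : (fun x => φ x • g x) =ᵐ[μ₀]
        fun t => ((b (Real.exp (-t)) : ℝ) : ℂ) * g t := by
      filter_upwards [hmem_Ioi] with t ht
      have : b (Real.exp (-t)) = φ t := by
        simp [hbdef, Real.exp_pos (-t), Real.log_exp]
      rw [this, Complex.real_smul]
    rw [integral_congr_ae hae, hcont b hbcont]
  -- finally F = 0 a.e.
  filter_upwards [hg0] with t ht
  have : Complex.exp (-(1 : ℂ) * t) * F t = 0 := ht
  rcases mul_eq_zero.mp this with h' | h'
  · exact absurd h' (Complex.exp_ne_zero _)
  · exact h'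

set_option maxHeartbeats 1000000 in
/-- The linear span of the exponentials `t ↦ e^{−αt}`, `α > 0`, is dense in `L²(0,∞)`. -/
theorem span_exponentials_dense :
    Dense (↑(Submodule.span ℂ
      {g : Lp ℂ 2 (volume.restrict (Set.Ioi (0 : ℝ))) |
        ∃ α : ℝ, 0 < α ∧
          (g : ℝ → ℂ) =ᵐ[volume.restrict (Set.Ioi (0 : ℝ))]
            fun t : ℝ => Complex.exp (-(α : ℂ) * t)}) :
      Set (Lp ℂ 2 (volume.restrict (Set.Ioi (0 : ℝ))))) := by
  rw [Submodule.dense_iff_topologicalClosure_eq_top,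
    Submodule.topologicalClosure_eq_top_iff, Submodule.eq_bot_iff]
  intro f hf
  -- orthogonality against each exponential
  have hInt : ∀ α : ℝ, 0 < α →
      ∫ t, Complex.exp (-(α : ℂ) * t) * (f : ℝ → ℂ) t ∂μ₀ = 0 := by
    intro α hα
    have hmem := memLp_exp_aux α hα
    have hS : (hmem.toLp _) ∈ Submodule.span ℂ
        {g : Lp ℂ 2 μ₀ | ∃ α : ℝ, 0 < α ∧
          (g : ℝ → ℂ) =ᵐ[μ₀] fun t : ℝ => Complex.exp (-(α : ℂ) * t)} :=
      Submodule.subset_span ⟨α, hα, hmem.coeFn_toLp⟩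
    have horth := (Submodule.mem_orthogonal _ f).mp hf _ hS
    rw [MeasureTheory.L2.inner_def] at horth
    rw [← horth]
    apply integral_congr_ae
    filter_upwards [hmem.coeFn_toLp] with t ht
    rw [RCLike.inner_apply, ht, mul_comm]
    congr 1
    rw [← Complex.exp_conj]
    congr 1
    simp [map_mul, Complex.conj_ofReal]
  have hFint : Integrable (fun t : ℝ => Complex.exp (-(1 : ℂ) * t) * (f : ℝ → ℂ) t) μ₀ := by
    have := MeasureTheory.L2.integrable_inner (𝕜 := ℂ) ((memLp_exp_aux 1 one_pos).toLp _) f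
    refine this.congr ?_
    filter_upwards [(memLp_exp_aux 1 one_pos).coeFn_toLp] with t ht
    rw [RCLike.inner_apply, ht, mul_comm]
    congr 1
    rw [← Complex.exp_conj]
    congr 1
    simp [map_mul, Complex.conj_ofReal]
  have h0 := laplace_vanishing_aux hFint hInt
  exact MeasureTheory.Lp.eq_zero_iff_ae_eq_zero.mpr h0
end
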